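/- arXiv:1912.11943 — 3 statements merged into one kernel-verified Lean document; each statement's English description precedes it below -/
import Mathlib

section
/- Lipschitz continuity in y and structure of the gradient Ĥ: Let X ∈ ℝ^{n×p} be fixed and g : ℝ^p → ℝ convex, and for each y ∈ ℝⁿ let β̂(y) be a minimizer of b ↦ ‖y − Xb‖²/(2n) + g(b) (assumed to exist). Then: (i) for all y, ỹ ∈ ℝⁿ and all choices of minimizers, ‖X(β̂(y) − β̂(ỹ))‖ ≤ ‖y − ỹ‖, so the map y ↦ Xβ̂(y) is well-defined and 1-Lipschitz; (ii) for Lebesgue-almost every y ∈ ℝⁿ, the map y ↦ Xβ̂(y) is Fréchet differentiable at y with gradient Ĥ ∈ ℝ^{n×n} (i.e. Xβ̂(y + η) = Xβ̂(y) + Ĥᵀη + o(‖η‖)) that is symmetric positive semidefinite with all eigenvalues in [0, 1]; consequently, with d̂f = tr(Ĥ), one has (n − d̂f)(1 − d̂f/n) ≤ ‖I_n − Ĥ‖_F² ≤ n − d̂f. -/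
open MeasureTheory Matrix
open scoped ENNReal NNReal Topology

noncomputable section

/-- Penalized least-squares objective `b ↦ ‖y − Xb‖²/(2n) + g(b)`. -/
def obj {n p : ℕ} (g : (Fin p → ℝ) → ℝ) (y : Fin n → ℝ) (X : Matrix (Fin n) (Fin p) ℝ)
    (b : Fin p → ℝ) : ℝ :=
  (∑ i, (y i - X.mulVec b i) ^ 2) / (2 * (n : ℝ)) + g b

/-- The continuous linear map `v ↦ Mv`. -/
def mulVecCLM {m k : Type*} [Fintype m] [Fintype k] (M : Matrix m k ℝ) :
    (k → ℝ) →L[ℝ] (m → ℝ) :=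
  LinearMap.toContinuousLinearMap M.mulVecLin

/-- Squared Frobenius norm of a matrix. -/
def frobSq {n : ℕ} (M : Matrix (Fin n) (Fin n) ℝ) : ℝ := ∑ i, ∑ j, M i j ^ 2

-- subgradient-type inequality from minimality
lemma key_ineq {n p : ℕ} (X : Matrix (Fin n) (Fin p) ℝ) {g : (Fin p → ℝ) → ℝ}
    (hg : ConvexOn ℝ Set.univ g) (y : Fin n → ℝ) (b b' : Fin p → ℝ)
    (hb : IsMinOn (obj g y X) Set.univ b) :
    ∑ i, (y i - X.mulVec b i) * (X.mulVec b' i - X.mulVec b i) ≤ (n : ℝ) * (g b' - g b) := by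
  rcases Nat.eq_zero_or_pos n with hn | hn
  · subst hn; simp
  have hn' : (0:ℝ) < n := by exact_mod_cast hn
  set S := ∑ i, (y i - X.mulVec b i) * (X.mulVec b' i - X.mulVec b i) with hS
  set Q := ∑ i, (X.mulVec b' i - X.mulVec b i) ^ 2 with hQ
  have hQ0 : 0 ≤ Q := Finset.sum_nonneg fun i _ => sq_nonneg _
  have key : ∀ t : ℝ, 0 < t → t ≤ 1 → S ≤ (n:ℝ) * (g b' - g b) + t * Q / 2 := by
    intro t ht ht1
    have hmin := hb (Set.mem_univ (b + t • (b' - b)))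
    have hXv : X.mulVec (b + t • (b' - b)) = fun i => X.mulVec b i + t * (X.mulVec b' i - X.mulVec b i) := by
      funext i
      simp [Matrix.mulVec_add, Matrix.mulVec_smul, Matrix.mulVec_sub, mul_sub]
    have hconv := hg.2 (Set.mem_univ b) (Set.mem_univ b') (by linarith : (0:ℝ) ≤ 1 - t)
      (le_of_lt ht) (by ring : (1 - t) + t = 1)
    have hcomb : b + t • (b' - b) = (1 - t) • b + t • b' := by
      module
    have hquad : ∑ i, (y i - X.mulVec (b + t • (b' - b)) i) ^ 2
        = (∑ i, (y i - X.mulVec b i) ^ 2) - 2 * t * S + t ^ 2 * Q := by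
      rw [hXv, hS, hQ, Finset.mul_sum, Finset.mul_sum, ← Finset.sum_sub_distrib,
        ← Finset.sum_add_distrib]
      exact Finset.sum_congr rfl fun i _ => by ring
    have h1 : obj g y X b ≤ obj g y X (b + t • (b' - b)) := hmin
    rw [obj, obj, hquad] at h1
    rw [hcomb] at h1
    have h2 : ((∑ i, (y i - X.mulVec b i) ^ 2) - 2 * t * S + t ^ 2 * Q) / (2 * n)
        + ((1 - t) * g b + t * g b') ≥ (∑ i, (y i - X.mulVec b i) ^ 2) / (2 * n) + g b := by
      calc (∑ i, (y i - X.mulVec b i) ^ 2) / (2 * n) + g b ≤ _ := h1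
        _ ≤ _ := by gcongr; exact hconv
    have hsplit : ((∑ i, (y i - X.mulVec b i) ^ 2) - 2 * t * S + t ^ 2 * Q) / (2 * (n:ℝ))
        = (∑ i, (y i - X.mulVec b i) ^ 2) / (2 * (n:ℝ)) + (- 2 * t * S + t ^ 2 * Q) / (2 * (n:ℝ)) := by
      ring
    have hd : t * (g b - g b') ≤ (- 2 * t * S + t ^ 2 * Q) / (2 * (n:ℝ)) := by
      rw [hsplit] at h2; linarith
    have hd2 := (le_div_iff₀ (by positivity : (0:ℝ) < 2 * n)).mp hd
    have h4' : t * (2 * (n:ℝ) * (g b - g b')) ≤ t * (-2 * S + t * Q) := by nlinarith [hd2]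
    have h4 : 2 * (n:ℝ) * (g b - g b') ≤ -2 * S + t * Q := le_of_mul_le_mul_left h4' ht
    linarith
  refine le_of_forall_pos_le_add fun ε hε => ?_
  have ht := key (min 1 (ε / (Q + 1))) (lt_min one_pos (by positivity)) (min_le_left _ _)
  have : min 1 (ε / (Q + 1)) * Q / 2 ≤ ε := by
    have h1 : min 1 (ε / (Q + 1)) ≤ ε / (Q + 1) := min_le_right _ _
    have h2 : min 1 (ε / (Q + 1)) * Q ≤ (ε / (Q + 1)) * Q := by
      apply mul_le_mul_of_nonneg_right h1 hQ0
    have h3 : (ε / (Q + 1)) * Q ≤ ε := by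
      rw [div_mul_eq_mul_div, div_le_iff₀ (by positivity)]
      nlinarith
    linarith
  linarith

-- firm nonexpansiveness
lemma firm_ineq {n p : ℕ} (X : Matrix (Fin n) (Fin p) ℝ) {g : (Fin p → ℝ) → ℝ}
    (hg : ConvexOn ℝ Set.univ g) (y y' : Fin n → ℝ) (b b' : Fin p → ℝ)
    (hb : IsMinOn (obj g y X) Set.univ b) (hb' : IsMinOn (obj g y' X) Set.univ b') :
    ∑ i, (X.mulVec b i - X.mulVec b' i) ^ 2
      ≤ ∑ i, (X.mulVec b i - X.mulVec b' i) * (y i - y' i) := by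
  have h1 := key_ineq X hg y b b' hb
  have h2 := key_ineq X hg y' b' b hb'
  have h3 : ∑ i, ((y i - X.mulVec b i) * (X.mulVec b' i - X.mulVec b i)
      + (y' i - X.mulVec b' i) * (X.mulVec b i - X.mulVec b' i)) ≤ 0 := by
    rw [Finset.sum_add_distrib]; linarith
  have h4 : ∑ i, ((X.mulVec b i - X.mulVec b' i) ^ 2
      - (X.mulVec b i - X.mulVec b' i) * (y i - y' i)) ≤ 0 := by
    refine le_trans (le_of_eq (Finset.sum_congr rfl fun i _ => ?_)) h3
    ring
  rw [Finset.sum_sub_distrib] at h4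
  linarith

-- squared Lipschitz bound
lemma sq_lip {n p : ℕ} (X : Matrix (Fin n) (Fin p) ℝ) {g : (Fin p → ℝ) → ℝ}
    (hg : ConvexOn ℝ Set.univ g) (y y' : Fin n → ℝ) (b b' : Fin p → ℝ)
    (hb : IsMinOn (obj g y X) Set.univ b) (hb' : IsMinOn (obj g y' X) Set.univ b') :
    ∑ i, (X.mulVec b i - X.mulVec b' i) ^ 2 ≤ ∑ i, (y i - y' i) ^ 2 := by
  set u := fun i => X.mulVec b i - X.mulVec b' i
  set w := fun i => y i - y' i
  have hfirm := firm_ineq X hg y y' b b' hb hb'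
  have hcs := Finset.sum_mul_sq_le_sq_mul_sq Finset.univ u w
  set U := ∑ i, u i ^ 2
  set W := ∑ i, w i ^ 2
  have hU : 0 ≤ U := Finset.sum_nonneg fun i _ => sq_nonneg _
  have hW : 0 ≤ W := Finset.sum_nonneg fun i _ => sq_nonneg _
  nlinarith [hfirm, hcs, hU, hW, sq_nonneg (U - W)]

lemma sqrt_lip {n p : ℕ} (X : Matrix (Fin n) (Fin p) ℝ) {g : (Fin p → ℝ) → ℝ}
    (hg : ConvexOn ℝ Set.univ g) (y y' : Fin n → ℝ) (b b' : Fin p → ℝ)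
    (hb : IsMinOn (obj g y X) Set.univ b) (hb' : IsMinOn (obj g y' X) Set.univ b') :
    Real.sqrt (∑ i, (X.mulVec b i - X.mulVec b' i) ^ 2) ≤
      Real.sqrt (∑ i, (y i - y' i) ^ 2) :=
  Real.sqrt_le_sqrt (sq_lip X hg y y' b b' hb hb')

-- dot product continuous linear maps
def dot1 {n : ℕ} (a : Fin n → ℝ) : (Fin n → ℝ) →L[ℝ] ℝ :=
  LinearMap.toContinuousLinearMap
    { toFun := fun b => ∑ i, a i * b i
      map_add' := fun b c => by simp [mul_add, Finset.sum_add_distrib]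
      map_smul' := fun r b => by simp [Finset.mul_sum, mul_left_comm] }

@[simp] lemma dot1_apply {n : ℕ} (a b : Fin n → ℝ) : dot1 a b = ∑ i, a i * b i := rfl

def dotCLM {n : ℕ} : (Fin n → ℝ) →L[ℝ] (Fin n → ℝ) →L[ℝ] ℝ :=
  LinearMap.toContinuousLinearMap
    { toFun := dot1
      map_add' := fun a b => by
        ext c; simp [add_mul, Finset.sum_add_distrib]
      map_smul' := fun r a => by
        ext c; simp [Finset.mul_sum, mul_assoc] }

@[simp] lemma dotCLM_apply {n : ℕ} (a : Fin n → ℝ) : (dotCLM a : (Fin n → ℝ) →L[ℝ] ℝ) = dot1 a := rfl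

lemma sum_sq_le_n_norm {n : ℕ} (h : Fin n → ℝ) : ∑ i, h i ^ 2 ≤ (n : ℝ) * ‖h‖ ^ 2 := by
  calc ∑ i, h i ^ 2 ≤ ∑ _i : Fin n, ‖h‖ ^ 2 := by
        refine Finset.sum_le_sum fun i _ => ?_
        have h1 : |h i| ≤ ‖h‖ := by
          simpa [Real.norm_eq_abs] using norm_le_pi_norm h i
        calc h i ^ 2 = |h i| ^ 2 := (sq_abs _).symm
          _ ≤ ‖h‖ ^ 2 := pow_le_pow_left₀ (abs_nonneg _) h1 2
    _ ≤ (n : ℝ) * ‖h‖ ^ 2 := by simp [Finset.sum_const, mul_comm]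

lemma obj_expand {n p : ℕ} (X : Matrix (Fin n) (Fin p) ℝ) (g : (Fin p → ℝ) → ℝ)
    (y h : Fin n → ℝ) (b : Fin p → ℝ) :
    obj g (y + h) X b = obj g y X b +
      (2 * ∑ i, (y i - X.mulVec b i) * h i + ∑ i, h i ^ 2) / (2 * (n : ℝ)) := by
  rw [obj, obj]
  have : ∑ i, ((y + h) i - X.mulVec b i) ^ 2
      = ∑ i, (y i - X.mulVec b i) ^ 2 + (2 * ∑ i, (y i - X.mulVec b i) * h i + ∑ i, h i ^ 2) := by
    rw [Finset.mul_sum, ← Finset.sum_add_distrib, ← Finset.sum_add_distrib]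
    exact Finset.sum_congr rfl fun i _ => by simp [Pi.add_apply]; ring
  rw [this]
  ring

lemma f_hasFDerivAt {n p : ℕ} (hn : 0 < n) (X : Matrix (Fin n) (Fin p) ℝ)
    {g : (Fin p → ℝ) → ℝ} (hg : ConvexOn ℝ Set.univ g)
    (bhat : (Fin n → ℝ) → Fin p → ℝ)
    (hbhat : ∀ y, IsMinOn (obj g y X) Set.univ (bhat y)) (y : Fin n → ℝ) :
    HasFDerivAt (fun z => obj g z X (bhat z))
      (((n : ℝ)⁻¹) • dot1 (fun i => y i - X.mulVec (bhat y) i)) y := by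
  have hn' : (0:ℝ) < n := by exact_mod_cast hn
  rw [hasFDerivAt_iff_isLittleO_nhds_zero, Asymptotics.isLittleO_iff]
  intro c hc
  filter_upwards [Metric.ball_mem_nhds (0 : Fin n → ℝ) hc] with h hh
  have hball : ‖h‖ < c := by simpa [mem_ball_zero_iff] using hh
  set F := fun z => X.mulVec (bhat z) with hF
  set S := ∑ i, (y i - F y i) * h i with hSdef
  set Qh := ∑ i, h i ^ 2 with hQh
  have hQh0 : 0 ≤ Qh := Finset.sum_nonneg fun i _ => sq_nonneg _
  -- upper bound
  have hupper : obj g (y + h) X (bhat (y + h)) ≤ obj g y X (bhat y) + (2 * S + Qh) / (2 * n) := by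
    calc obj g (y + h) X (bhat (y + h)) ≤ obj g (y + h) X (bhat y) :=
          hbhat (y + h) (Set.mem_univ _)
      _ = obj g y X (bhat y) + (2 * S + Qh) / (2 * n) := obj_expand X g y h (bhat y)
  -- lower bound
  have hS' : S - Qh ≤ ∑ i, (y i - F (y + h) i) * h i := by
    have hsplit : ∑ i, (y i - F (y + h) i) * h i
        = S + ∑ i, (F y i - F (y + h) i) * h i := by
      rw [hSdef, ← Finset.sum_add_distrib]
      exact Finset.sum_congr rfl fun i _ => by ring
    have hQd : ∑ i, (F y i - F (y + h) i) ^ 2 ≤ Qh := by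
      have := sq_lip X hg y (y + h) (bhat y) (bhat (y + h)) (hbhat y) (hbhat (y + h))
      calc ∑ i, (F y i - F (y + h) i) ^ 2 ≤ ∑ i, (y i - (y + h) i) ^ 2 := this
        _ = Qh := Finset.sum_congr rfl fun i _ => by simp [Pi.add_apply]
    have hcs := Finset.sum_mul_sq_le_sq_mul_sq Finset.univ
      (fun i => F y i - F (y + h) i) h
    have hQd0 : 0 ≤ ∑ i, (F y i - F (y + h) i) ^ 2 :=
      Finset.sum_nonneg fun i _ => sq_nonneg _
    have hT : -Qh ≤ ∑ i, (F y i - F (y + h) i) * h i := by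
      nlinarith [hcs, hQd, hQd0, hQh0,
        sq_nonneg ((∑ i, (F y i - F (y + h) i) * h i) + Qh)]
    linarith [hsplit ▸ (by linarith [hT] : S - Qh ≤ S + ∑ i, (F y i - F (y + h) i) * h i)]
  have hlower : obj g y X (bhat y) + (2 * (S - Qh) + Qh) / (2 * n)
      ≤ obj g (y + h) X (bhat (y + h)) := by
    calc obj g y X (bhat y) + (2 * (S - Qh) + Qh) / (2 * n)
        ≤ obj g y X (bhat (y + h)) + (2 * (∑ i, (y i - F (y + h) i) * h i) + Qh) / (2 * n) := by
          have h1 : obj g y X (bhat y) ≤ obj g y X (bhat (y + h)) := hbhat y (Set.mem_univ _)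
          have h2 : (2 * (S - Qh) + Qh) / (2 * n)
              ≤ (2 * (∑ i, (y i - F (y + h) i) * h i) + Qh) / (2 * n) := by
            apply div_le_div_of_nonneg_right ?_ (by positivity)
            · linarith
          linarith
      _ = obj g (y + h) X (bhat (y + h)) := (obj_expand X g y h (bhat (y + h))).symm
  -- conclude
  have happ : (((n : ℝ)⁻¹) • dot1 (fun i => y i - F y i)) h = S / n := by
    simp [hSdef, div_eq_inv_mul]
  have herr : |obj g (y + h) X (bhat (y + h)) - obj g y X (bhat y) - S / n| ≤ Qh / n := by
    rw [abs_le]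
    constructor
    · have : obj g y X (bhat y) + (2 * (S - Qh) + Qh) / (2 * n)
          = obj g y X (bhat y) + S / n - Qh / (2 * n) := by field_simp; ring
      rw [this] at hlower
      have : Qh / (2 * n) ≤ Qh / n := by
        apply div_le_div_of_nonneg_left hQh0 (by positivity)  <;> linarith
      linarith
    · have : obj g y X (bhat y) + (2 * S + Qh) / (2 * n)
          = obj g y X (bhat y) + S / n + Qh / (2 * n) := by field_simp; ring
      rw [this] at hupper
      have : Qh / (2 * n) ≤ Qh / n := by
        apply div_le_div_of_nonneg_left hQh0 (by positivity) <;> linarith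
      linarith
  have hQn : Qh / n ≤ ‖h‖ ^ 2 := by
    rw [div_le_iff₀ hn']
    calc Qh ≤ (n : ℝ) * ‖h‖ ^ 2 := sum_sq_le_n_norm h
      _ = ‖h‖ ^ 2 * n := by ring
  rw [happ, Real.norm_eq_abs]
  calc |obj g (y + h) X (bhat (y + h)) - obj g y X (bhat y) - S / n| ≤ Qh / n := herr
    _ ≤ ‖h‖ ^ 2 := hQn
    _ ≤ c * ‖h‖ := by nlinarith [norm_nonneg h]

lemma deriv_firm {n p : ℕ} (X : Matrix (Fin n) (Fin p) ℝ)
    {g : (Fin p → ℝ) → ℝ} (hg : ConvexOn ℝ Set.univ g)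
    (bhat : (Fin n → ℝ) → Fin p → ℝ)
    (hbhat : ∀ y, IsMinOn (obj g y X) Set.univ (bhat y)) (y : Fin n → ℝ)
    (D : (Fin n → ℝ) →L[ℝ] (Fin n → ℝ))
    (hD : HasFDerivAt (fun z => X.mulVec (bhat z)) D y) (v : Fin n → ℝ) :
    ∑ i, (D v i) ^ 2 ≤ ∑ i, D v i * v i := by
  set F := fun z => X.mulVec (bhat z) with hF
  set φ : ℝ → (Fin n → ℝ) := fun t => F (y + t • v) with hφ
  have hline : HasDerivAt (fun t : ℝ => y + t • v) v 0 := by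
    simpa using ((hasDerivAt_id (0:ℝ)).smul_const v).const_add y
  have hD0 : HasFDerivAt F D (y + (0:ℝ) • v) := by simpa using hD
  have hphi : HasDerivAt φ (D v) 0 := by
    exact hD0.comp_hasDerivAt (0:ℝ) hline
  rw [hasDerivAt_iff_tendsto_slope] at hphi
  have htend : Filter.Tendsto (slope φ 0) (nhdsWithin 0 (Set.Ioi 0)) (nhds (D v)) :=
    hphi.mono_left (nhdsWithin_mono 0 (fun t ht => ne_of_gt ht))
  set ψ : (Fin n → ℝ) → ℝ := fun u => ∑ i, (u i * v i - u i ^ 2) with hψ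
  have hψc : Continuous ψ := by
    apply continuous_finset_sum
    intro i _
    exact ((continuous_apply i).mul continuous_const).sub ((continuous_apply i).pow 2)
  have hev : ∀ᶠ t in nhdsWithin 0 (Set.Ioi 0), 0 ≤ ψ (slope φ 0 t) := by
    filter_upwards [self_mem_nhdsWithin] with t ht
    have ht' : (0:ℝ) < t := ht
    have key := firm_ineq X hg (y + t • v) y (bhat (y + t • v)) (bhat y)
      (hbhat (y + t • v)) (hbhat y)
    have key' : ∑ i, (φ t i - φ 0 i) ^ 2 ≤ ∑ i, (φ t i - φ 0 i) * (t * v i) := by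
      have e0 : φ 0 = F y := by simp [hφ]
      rw [e0]
      calc ∑ i, (F (y + t • v) i - F y i) ^ 2
          ≤ ∑ i, (F (y + t • v) i - F y i) * ((y + t • v) i - y i) := key
        _ = ∑ i, (F (y + t • v) i - F y i) * (t * v i) :=
            Finset.sum_congr rfl fun i _ => by simp [Pi.add_apply, Pi.smul_apply]
    have hslope : slope φ 0 t = t⁻¹ • (φ t - φ 0) := by
      rw [slope_def_module]; simp
    rw [hslope]
    show 0 ≤ ∑ i, ((t⁻¹ • (φ t - φ 0)) i * v i - ((t⁻¹ • (φ t - φ 0)) i) ^ 2)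
    have hexpand : ∑ i, ((t⁻¹ • (φ t - φ 0)) i * v i - ((t⁻¹ • (φ t - φ 0)) i) ^ 2)
        = t⁻¹ * t⁻¹ * ((∑ i, (φ t i - φ 0 i) * (t * v i)) - ∑ i, (φ t i - φ 0 i) ^ 2) := by
      rw [← Finset.sum_sub_distrib, Finset.mul_sum]
      refine Finset.sum_congr rfl fun i _ => ?_
      simp only [Pi.smul_apply, Pi.sub_apply, smul_eq_mul]
      field_simp
    rw [hexpand]
    have := sub_nonneg.mpr key'
    positivity
  have hfinal : 0 ≤ ψ (D v) :=
    ge_of_tendsto ((hψc.tendsto (D v)).comp htend) hev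
  rw [hψ] at hfinal
  simp only [Finset.sum_sub_distrib] at hfinal
  linarith

lemma deriv_bounds {n p : ℕ} (X : Matrix (Fin n) (Fin p) ℝ)
    {g : (Fin p → ℝ) → ℝ} (hg : ConvexOn ℝ Set.univ g)
    (bhat : (Fin n → ℝ) → Fin p → ℝ)
    (hbhat : ∀ y, IsMinOn (obj g y X) Set.univ (bhat y)) (y : Fin n → ℝ)
    (D : (Fin n → ℝ) →L[ℝ] (Fin n → ℝ))
    (hD : HasFDerivAt (fun z => X.mulVec (bhat z)) D y) (v : Fin n → ℝ) :
    0 ≤ ∑ i, D v i * v i ∧ ∑ i, D v i * v i ≤ ∑ i, v i ^ 2 := by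
  have h1 := deriv_firm X hg bhat hbhat y D hD v
  have hB : 0 ≤ ∑ i, (D v i) ^ 2 := Finset.sum_nonneg fun i _ => sq_nonneg _
  have hC : 0 ≤ ∑ i, v i ^ 2 := Finset.sum_nonneg fun i _ => sq_nonneg _
  have hcs := Finset.sum_mul_sq_le_sq_mul_sq Finset.univ (fun i => D v i) v
  refine ⟨le_trans hB h1, ?_⟩
  rcases le_or_gt (∑ i, D v i * v i) 0 with hA | hA
  · linarith
  · nlinarith [hcs, h1, hB, hC, hA]

lemma deriv_symm {n p : ℕ} (hn : 0 < n) (X : Matrix (Fin n) (Fin p) ℝ)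
    {g : (Fin p → ℝ) → ℝ} (hg : ConvexOn ℝ Set.univ g)
    (bhat : (Fin n → ℝ) → Fin p → ℝ)
    (hbhat : ∀ y, IsMinOn (obj g y X) Set.univ (bhat y)) (y : Fin n → ℝ)
    (D : (Fin n → ℝ) →L[ℝ] (Fin n → ℝ))
    (hD : HasFDerivAt (fun z => X.mulVec (bhat z)) D y) (v w : Fin n → ℝ) :
    ∑ i, D v i * w i = ∑ i, D w i * v i := by
  have hn' : (0:ℝ) < n := by exact_mod_cast hn
  set F := fun z => X.mulVec (bhat z) with hF
  set f' : (Fin n → ℝ) → (Fin n → ℝ) →L[ℝ] ℝ :=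
    fun z => ((n : ℝ)⁻¹) • dot1 (fun i => z i - F z i) with hf'
  have hf : ∀ z, HasFDerivAt (fun u => obj g u X (bhat u)) (f' z) z :=
    fun z => f_hasFDerivAt hn X hg bhat hbhat z
  have hsub : HasFDerivAt (fun z => z - F z) (ContinuousLinearMap.id ℝ (Fin n → ℝ) - D) y :=
    (hasFDerivAt_id y).sub hD
  have hlin : HasFDerivAt (fun u : Fin n → ℝ => (((n : ℝ)⁻¹) • dotCLM) u)
      (((n : ℝ)⁻¹) • dotCLM) (y - F y) :=
    (((n : ℝ)⁻¹) • (dotCLM (n := n))).hasFDerivAt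
  have hcomp : HasFDerivAt f'
      ((((n : ℝ)⁻¹) • dotCLM).comp (ContinuousLinearMap.id ℝ (Fin n → ℝ) - D)) y :=
    hlin.comp y hsub
  have hsymm := second_derivative_symmetric_of_eventually
    (Filter.Eventually.of_forall hf) hcomp v w
  have hexp : ∀ a b : Fin n → ℝ,
      (((((n : ℝ)⁻¹) • dotCLM).comp (ContinuousLinearMap.id ℝ (Fin n → ℝ) - D)) a) b
      = (n : ℝ)⁻¹ * ∑ i, (a i - D a i) * b i := by
    intro a b
    simp [ContinuousLinearMap.comp_apply, ContinuousLinearMap.smul_apply,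
      ContinuousLinearMap.sub_apply, ContinuousLinearMap.id_apply]
    rw [← mul_sub, ← Finset.sum_sub_distrib]
    exact congrArg _ (Finset.sum_congr rfl fun i _ => by ring)
  rw [hexp v w, hexp w v] at hsymm
  have h2 : ∑ i, (v i - D v i) * w i = ∑ i, (w i - D w i) * v i :=
    mul_left_cancel₀ (inv_ne_zero (ne_of_gt hn')) hsymm
  have e1 : ∑ i, (v i - D v i) * w i = (∑ i, v i * w i) - ∑ i, D v i * w i := by
    rw [← Finset.sum_sub_distrib]; exact Finset.sum_congr rfl fun i _ => by ring
  have e2 : ∑ i, (w i - D w i) * v i = (∑ i, w i * v i) - ∑ i, D w i * v i := by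
    rw [← Finset.sum_sub_distrib]; exact Finset.sum_congr rfl fun i _ => by ring
  have h4 : ∑ i, v i * w i = ∑ i, w i * v i :=
    Finset.sum_congr rfl fun i _ => mul_comm _ _
  rw [e1, e2] at h2
  linarith

lemma trace_frob_bounds {n : ℕ} (hn : 0 < n) {M : Matrix (Fin n) (Fin n) ℝ}
    (h1 : M.PosSemidef) (h2 : (1 - M).PosSemidef) :
    M.trace * M.trace / n ≤ frobSq M ∧ frobSq M ≤ M.trace := by
  have hn' : (0:ℝ) < n := by exact_mod_cast hn
  have hHerm : M.IsHermitian := h1.1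
  set lam := hHerm.eigenvalues with hlam
  set U : Matrix (Fin n) (Fin n) ℝ := (hHerm.eigenvectorUnitary : Matrix (Fin n) (Fin n) ℝ)
    with hUdef
  set Dg : Matrix (Fin n) (Fin n) ℝ := Matrix.diagonal (RCLike.ofReal ∘ lam) with hDg
  have hU : M = U * Dg * star U := hHerm.spectral_theorem
  have hUU : star U * U = 1 := Unitary.coe_star_mul_self hHerm.eigenvectorUnitary
  have htr : M.trace = ∑ i, lam i := by
    rw [hU, Matrix.trace_mul_cycle, hUU, Matrix.one_mul, hDg]
    simp [Matrix.trace_diagonal]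
  have hsymmM : ∀ i j, M j i = M i j := by
    intro i j
    have := congrFun (congrFun hHerm i) j
    simpa [Matrix.conjTranspose_apply] using this
  have hfrob_tr : frobSq M = (M * M).trace := by
    rw [frobSq, Matrix.trace]
    refine Finset.sum_congr rfl fun i _ => ?_
    rw [Matrix.diag_apply, Matrix.mul_apply]
    exact Finset.sum_congr rfl fun j _ => by rw [hsymmM i j]; ring
  have hMM : M * M = U * (Dg * Dg) * star U := by
    rw [hU]
    rw [show (U * Dg * star U) * (U * Dg * star U)
        = U * Dg * (star U * U) * (Dg * star U) by simp only [Matrix.mul_assoc], hUU]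
    simp only [Matrix.mul_one, Matrix.mul_assoc]
  have hfrob : frobSq M = ∑ i, lam i ^ 2 := by
    rw [hfrob_tr, hMM, Matrix.trace_mul_cycle, hUU, Matrix.one_mul, hDg]
    simp [Matrix.diagonal_mul_diagonal, Matrix.trace_diagonal]
    exact Finset.sum_congr rfl fun i _ => (sq (lam i)).symm
  have hlam0 : ∀ i, 0 ≤ lam i := h1.eigenvalues_nonneg
  have hlam1 : ∀ i, lam i ≤ 1 := by
    intro i
    set v : Fin n → ℝ := ⇑(hHerm.eigenvectorBasis i) with hv
    have hmv : M *ᵥ v = lam i • v := hHerm.mulVec_eigenvectorBasis i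
    have hnorm1 : ‖hHerm.eigenvectorBasis i‖ = 1 := hHerm.eigenvectorBasis.orthonormal.1 i
    have hdot : dotProduct v v = 1 := by
      rw [EuclideanSpace.norm_eq] at hnorm1
      have h := congrArg (fun x : ℝ => x ^ 2) hnorm1
      simp only [one_pow] at h
      rw [Real.sq_sqrt (Finset.sum_nonneg fun j _ => sq_nonneg _)] at h
      rw [dotProduct]
      calc ∑ j, v j * v j = ∑ j, ‖hHerm.eigenvectorBasis i j‖ ^ 2 :=
            Finset.sum_congr rfl fun j _ => by rw [Real.norm_eq_abs, sq_abs, sq]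
        _ = 1 := h
    have hq := h2.dotProduct_mulVec_nonneg v
    have : dotProduct (star v) ((1 - M) *ᵥ v) = 1 - lam i := by
      rw [Matrix.sub_mulVec, Matrix.one_mulVec, hmv]
      simp only [star_trivial, dotProduct_sub, dotProduct_smul, hdot,
        smul_eq_mul, mul_one]
    rw [this] at hq
    linarith
  constructor
  · rw [htr, hfrob, div_le_iff₀ hn']
    have := sq_sum_le_card_mul_sum_sq (s := Finset.univ) (f := lam)
    simp only [Finset.card_univ, Fintype.card_fin] at this
    calc (∑ i, lam i) * ∑ i, lam i = (∑ i, lam i) ^ 2 := (sq _).symm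
      _ ≤ (n : ℝ) * ∑ i, lam i ^ 2 := by exact_mod_cast this
      _ = (∑ i, lam i ^ 2) * n := by ring
  · rw [htr, hfrob]
    exact Finset.sum_le_sum fun i _ => by nlinarith [hlam0 i, hlam1 i]

/-- **Lipschitz continuity in `y` and structure of the gradient `Ĥ`.** -/
theorem lipschitz_and_gradient_structure
    (n p : ℕ) (X : Matrix (Fin n) (Fin p) ℝ) (g : (Fin p → ℝ) → ℝ)
    (hg : ConvexOn ℝ Set.univ g)
    (bhat : (Fin n → ℝ) → Fin p → ℝ)
    (hbhat : ∀ y, IsMinOn (obj g y X) Set.univ (bhat y)) :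
    -- (i)  `‖X(β̂(y) − β̂(ỹ))‖ ≤ ‖y − ỹ‖` for all `y, ỹ` and all choices of minimizers ...
    (∀ (y y' : Fin n → ℝ) (b b' : Fin p → ℝ),
      IsMinOn (obj g y X) Set.univ b → IsMinOn (obj g y' X) Set.univ b' →
      Real.sqrt (∑ i, (X.mulVec b i - X.mulVec b' i) ^ 2) ≤
        Real.sqrt (∑ i, (y i - y' i) ^ 2)) ∧
    (∀ y y' : Fin n → ℝ,
      Real.sqrt (∑ i, (X.mulVec (bhat y) i - X.mulVec (bhat y') i) ^ 2) ≤
        Real.sqrt (∑ i, (y i - y' i) ^ 2)) ∧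
    -- (ii) for Lebesgue-a.e. `y`, the map is differentiable at `y` with a symmetric
    -- positive semidefinite gradient `Ĥ` whose eigenvalues lie in `[0, 1]`
    ∀ᵐ y ∂(volume : Measure (Fin n → ℝ)), ∃ H : Matrix (Fin n) (Fin n) ℝ,
      HasFDerivAt (fun u => X.mulVec (bhat u)) (mulVecCLM Hᵀ) y ∧
      H.PosSemidef ∧ (1 - H).PosSemidef ∧
      ((n : ℝ) - H.trace) * (1 - H.trace / n) ≤ frobSq (1 - H) ∧
      frobSq (1 - H) ≤ (n : ℝ) - H.trace := by
  refine ⟨fun y y' b b' hb hb' => sqrt_lip X hg y y' b b' hb hb',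
    fun y y' => sqrt_lip X hg y y' _ _ (hbhat y) (hbhat y'), ?_⟩
  rcases Nat.eq_zero_or_pos n with hn | hn
  · -- degenerate case n = 0
    subst hn
    refine Filter.Eventually.of_forall fun y => ⟨0, ?_, ?_, ?_, ?_, ?_⟩
    · have h1 : (fun u : Fin 0 → ℝ => X.mulVec (bhat u)) = fun _ => X.mulVec (bhat y) :=
        funext fun u => Subsingleton.elim _ _
      have h2 : mulVecCLM (0 : Matrix (Fin 0) (Fin 0) ℝ)ᵀ = 0 := by
        apply ContinuousLinearMap.ext
        intro v
        funext i
        exact i.elim0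
      rw [h1, h2]
      exact hasFDerivAt_const _ _
    · exact .of_dotProduct_mulVec_nonneg (by ext i j; exact i.elim0) fun x => by simp [dotProduct]
    · exact .of_dotProduct_mulVec_nonneg (by ext i j; exact i.elim0) fun x => by simp [dotProduct]
    · simp [frobSq, Matrix.trace]
    · simp [frobSq, Matrix.trace]
  -- main case n > 0
  have hn' : (0:ℝ) < n := by exact_mod_cast hn
  set F := fun u => X.mulVec (bhat u) with hFdef
  have hlip : LipschitzWith ⟨Real.sqrt n, Real.sqrt_nonneg n⟩ F := by
    apply LipschitzWith.of_dist_le_mul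
    intro y y'
    rw [dist_eq_norm, dist_eq_norm]
    have step1 : ‖F y - F y'‖ ≤ Real.sqrt (∑ i, (F y i - F y' i) ^ 2) := by
      rw [pi_norm_le_iff_of_nonneg (Real.sqrt_nonneg _)]
      intro i
      rw [Pi.sub_apply, Real.norm_eq_abs, ← Real.sqrt_sq_eq_abs]
      exact Real.sqrt_le_sqrt (Finset.single_le_sum
        (fun j (_ : j ∈ Finset.univ) => sq_nonneg (F y j - F y' j)) (Finset.mem_univ i))
    have step2 : Real.sqrt (∑ i, (F y i - F y' i) ^ 2)
        ≤ Real.sqrt (∑ i, (y i - y' i) ^ 2) :=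
      sqrt_lip X hg y y' _ _ (hbhat y) (hbhat y')
    have step3 : Real.sqrt (∑ i, (y i - y' i) ^ 2) ≤ Real.sqrt n * ‖y - y'‖ := by
      have h1 : ∑ i, (y i - y' i) ^ 2 ≤ (n : ℝ) * ‖y - y'‖ ^ 2 := sum_sq_le_n_norm (y - y')
      calc Real.sqrt (∑ i, (y i - y' i) ^ 2) ≤ Real.sqrt ((n : ℝ) * ‖y - y'‖ ^ 2) :=
            Real.sqrt_le_sqrt h1
        _ = Real.sqrt n * ‖y - y'‖ := by
            rw [Real.sqrt_mul (by positivity) _, Real.sqrt_sq (norm_nonneg _)]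
    calc ‖F y - F y'‖ ≤ Real.sqrt (∑ i, (y i - y' i) ^ 2) := le_trans step1 step2
      _ ≤ Real.sqrt n * ‖y - y'‖ := step3
  filter_upwards [hlip.ae_differentiableAt (μ := volume)] with y hy
  set D := fderiv ℝ F y with hDdef
  have hD : HasFDerivAt F D y := hy.hasFDerivAt
  have hsym := deriv_symm hn X hg bhat hbhat y D hD
  have hbnd := deriv_bounds X hg bhat hbhat y D hD
  set H : Matrix (Fin n) (Fin n) ℝ := Matrix.of fun i j => D (Pi.single i 1) j with hHdef
  have hDv : ∀ v, Hᵀ.mulVec v = D v := by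
    intro v
    have hv : ∑ j, v j • (Pi.single j 1 : Fin n → ℝ) = v := by
      rw [show (fun j => v j • (Pi.single j 1 : Fin n → ℝ)) = fun j => (Pi.single j (v j) : Fin n → ℝ) from
        funext fun j => by rw [← Pi.single_smul, smul_eq_mul, mul_one]]
      exact Finset.univ_sum_single v
    funext i
    have hrhs : D v i = ∑ j, v j * D (Pi.single j 1) i := by
      conv_lhs => rw [← hv]
      rw [map_sum]
      rw [Finset.sum_apply]
      exact Finset.sum_congr rfl fun j _ => by rw [D.map_smul]; simp
    rw [hrhs, Matrix.mulVec]
    simp only [dotProduct, Matrix.transpose_apply, hHdef, Matrix.of_apply]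
    exact Finset.sum_congr rfl fun j _ => mul_comm _ _
  have hsingle : ∀ (u : Fin n → ℝ) (i : Fin n), ∑ k, u k * (Pi.single i 1 : Fin n → ℝ) k = u i := by
    intro u i
    simp [Pi.single_apply, mul_ite, Finset.sum_ite_eq']
  have hsymH : Hᵀ = H := by
    ext i j
    have := hsym (Pi.single j 1) (Pi.single i 1)
    rw [hsingle (D (Pi.single j 1)) i, hsingle (D (Pi.single i 1)) j] at this
    simpa [Matrix.transpose_apply, hHdef] using this
  have hMulVec : ∀ v, H.mulVec v = D v := fun v => by rw [← hsymH]; exact hDv v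
  have hHerm : H.IsHermitian := by
    show Hᴴ = H
    have hct : Hᴴ = Hᵀ := by
      ext i j
      simp [Matrix.conjTranspose_apply]
    rw [hct, hsymH]
  have hq : ∀ x : Fin n → ℝ, dotProduct (star x) (H.mulVec x) = ∑ i, D x i * x i := by
    intro x
    rw [hMulVec, star_trivial, dotProduct]
    exact Finset.sum_congr rfl fun i _ => mul_comm _ _
  have hpsdH : H.PosSemidef := .of_dotProduct_mulVec_nonneg hHerm fun x => by rw [hq x]; exact (hbnd x).1
  have hpsdM : (1 - H).PosSemidef := by
    refine .of_dotProduct_mulVec_nonneg (Matrix.isHermitian_one.sub hHerm) fun x => ?_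
    rw [Matrix.sub_mulVec, Matrix.one_mulVec, star_trivial, dotProduct_sub]
    have h1 : dotProduct x (H.mulVec x) = ∑ i, D x i * x i := by
      rw [hMulVec]
      exact Finset.sum_congr rfl fun i _ => mul_comm _ _
    have h2 : dotProduct x x = ∑ i, x i ^ 2 :=
      Finset.sum_congr rfl fun i _ => (sq _).symm
    rw [h1, h2]
    exact sub_nonneg.mpr (hbnd x).2
  have hpsdM' : (1 - (1 - H)).PosSemidef := by
    rw [sub_sub_cancel]
    exact hpsdH
  obtain ⟨hlow, hup⟩ := trace_frob_bounds hn hpsdM hpsdM'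
  have htrM : (1 - H).trace = (n : ℝ) - H.trace := by
    rw [Matrix.trace_sub, Matrix.trace_one]
    simp
  have hclm : mulVecCLM Hᵀ = D := ContinuousLinearMap.ext fun v => hDv v
  refine ⟨H, by rw [hclm]; exact hD, hpsdH, hpsdM, ?_, ?_⟩
  · have heq : ((n : ℝ) - H.trace) * (1 - H.trace / n)
        = ((1 - H).trace * (1 - H).trace) / n := by
      rw [htrM]
      field_simp
    rw [heq]
    exact hlow
  · rw [← htrM]
    exact hup
end
end

section
/- Deterministic loss equivalence to the oracle: Let y = Xβ + ε with arbitrary fixed X ∈ ℝ^{n×p}, ε ∈ ℝⁿ, β ∈ ℝ^p, let g : ℝ^p → ℝ be convex, β̂ a minimizer of b ↦ ‖y − Xb‖²/(2n) + g(b), h = β̂ − β, and let Σ be positive definite, σ > 0, β* = argmin_b {‖Σ^{1/2}(β − b)‖²/2 + g(b)}, h* = β* − β, R* = σ² + ‖Σ^{1/2}h*‖². Suppose g satisfies uᵀ(s − s*) ≥ μ‖Σ^{1/2}u‖² for all u ∈ ℝ^p and all subgradients s ∈ ∂g(u + β*), s* ∈ ∂g(β*), with μ ∈ [0, 1/2].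 Let F₊ = max{ ‖Xh*‖²/(n‖Σ^{1/2}h*‖²), ‖ε‖²/(σ²n), ‖ε − Xh*‖²/(nR*), 1 } and let F be a real number with F ≥ 2 such that either ‖Σ^{1/2}h‖² ≤ (F/2)·‖Xh‖²/n or μ > 0 and F = 2/μ. Then, with σ̄² = (F₊ − 1)R* + σ²: (i) ‖Σ^{1/2}h‖² ≤ F² max(σ̄², ‖Σ^{1/2}h*‖²) ≤ F₊F²R*; (ii) ‖Xh‖²/n ≤ max{ 2Fσ̄², σ̄² + F²‖Σ^{1/2}h*‖² } ≤ F₊F²R*. -/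
open Matrix
open scoped Topology

noncomputable section

/-- `s` is a subgradient of `g` at `b`. -/
def SubgradAt {p : ℕ} (g : (Fin p → ℝ) → ℝ) (s b : Fin p → ℝ) : Prop :=
  ∀ b', g b + ∑ j, s j * (b' j - b j) ≤ g b'

set_option maxHeartbeats 1600000

private lemma le_of_sq_le' {a b : ℝ} (ha : 0 ≤ a) (hb : 0 ≤ b) (h : a^2 ≤ b^2) : a ≤ b := by
  nlinarith [sq_nonneg (a - b), sq_nonneg (a + b)]

private lemma sumCS {n : ℕ} (f g : Fin n → ℝ) :
    (∑ i, f i * g i) ≤ Real.sqrt (∑ i, f i ^ 2) * Real.sqrt (∑ i, g i ^ 2) := by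
  have h := Finset.sum_mul_sq_le_sq_mul_sq Finset.univ f g
  have h1 : (∑ i, f i * g i) ≤ |∑ i, f i * g i| := le_abs_self _
  have h2 : |∑ i, f i * g i| = Real.sqrt ((∑ i, f i * g i)^2) := (Real.sqrt_sq_eq_abs _).symm
  calc (∑ i, f i * g i) ≤ Real.sqrt ((∑ i, f i * g i)^2) := h2 ▸ h1
    _ ≤ Real.sqrt ((∑ i, f i ^ 2) * ∑ i, g i ^ 2) := Real.sqrt_le_sqrt h
    _ = Real.sqrt (∑ i, f i ^ 2) * Real.sqrt (∑ i, g i ^ 2) :=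
        Real.sqrt_mul (Finset.sum_nonneg fun i _ => sq_nonneg _) _

private lemma subgradAt_of_isMinOn {q : ℕ} {g : (Fin q → ℝ) → ℝ}
    (hg : ConvexOn ℝ Set.univ g)
    (f : (Fin q → ℝ) → ℝ) (C : (Fin q → ℝ) → ℝ) (b s : Fin q → ℝ)
    (hC : ∀ d, 0 ≤ C d)
    (hf : ∀ d : Fin q → ℝ, ∀ t : ℝ, 0 < t → t ≤ 1 →
      f (b + t • d) ≤ f b - t * (∑ j, s j * d j) + t^2 * C d)
    (hmin : IsMinOn (fun b' => f b' + g b') Set.univ b) :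
    SubgradAt g s b := by
  intro b'
  set d : Fin q → ℝ := fun j => b' j - b j with hd
  have key : ∀ t : ℝ, 0 < t → t ≤ 1 → g b + ∑ j, s j * d j ≤ g b' + t * C d := by
    intro t ht0 ht1
    have hmem : f b + g b ≤ f (b + t • d) + g (b + t • d) :=
      isMinOn_iff.mp hmin (b + t • d) (Set.mem_univ _)
    have hconv := hg.2 (Set.mem_univ b) (Set.mem_univ b')
      (by linarith : (0:ℝ) ≤ 1 - t) (le_of_lt ht0) (by ring)
    have heq : (1-t) • b + t • b' = b + t • d := by
      funext j
      simp only [Pi.add_apply, Pi.smul_apply, smul_eq_mul, hd]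
      ring
    rw [heq] at hconv
    simp only [smul_eq_mul] at hconv
    have hf' := hf d t ht0 ht1
    have h2 : t * (g b + ∑ j, s j * d j) ≤ t * (g b' + t * C d) := by nlinarith [hmem, hconv, hf']
    exact le_of_mul_le_mul_left (by linarith [h2]) ht0
  have hC' := hC d
  apply le_of_forall_pos_le_add
  intro ε hε
  have ht0 : 0 < min 1 (ε / (C d + 1)) := lt_min one_pos (div_pos hε (by linarith))
  have ht1 : min 1 (ε / (C d + 1)) ≤ 1 := min_le_left _ _
  have hk := key _ ht0 ht1
  have htC : (min 1 (ε / (C d + 1))) * C d ≤ ε := by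
    calc (min 1 (ε / (C d + 1))) * C d ≤ (ε / (C d + 1)) * C d :=
          mul_le_mul_of_nonneg_right (min_le_right _ _) hC'
      _ ≤ ε := by
          rw [div_mul_eq_mul_div, div_le_iff₀ (by linarith : 0 < C d + 1)]
          nlinarith
  linarith

private lemma lemI (F a H' S : ℝ) (hF : 4 ≤ F) (ha : 0 ≤ a) (hH : 0 ≤ H') (hS : 0 ≤ S)
    (hmain : (F+4)*(a-H')^2 ≤ F*a^2 + F*S/2 - F*H'^2/2) :
    a^2 ≤ F^2 * max S (H'^2) := by
  rcases le_total S (H'^2) with hm | hm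
  · rw [max_eq_right hm]
    nlinarith [sq_nonneg (a - H'), sq_nonneg a, mul_nonneg ha hH, sq_nonneg (F*H' - a),
      mul_nonneg (mul_nonneg ha hH) (by linarith : (0:ℝ) ≤ F)]
  · rw [max_eq_left hm]
    set s := Real.sqrt S with hsdef
    have hs : 0 ≤ s := Real.sqrt_nonneg _
    have hs2 : s^2 = S := Real.sq_sqrt hS
    have hHs : H' ≤ s := le_of_sq_le' hH hs (by rw [hs2]; exact hm)
    have key : a ≤ F * s := by
      by_contra hc
      push_neg at hc
      have h1 : 0 ≤ (s - H') * (2*(F+4)*a - (3*F/2+4)*(H'+s)) := by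
        apply mul_nonneg (by linarith)
        nlinarith [mul_le_mul_of_nonneg_left hHs (by linarith : (0:ℝ) ≤ 3*F/2+4)]
      have h2 : 0 < (a - F*s) * (4*a - (F+4)*s) := by
        apply mul_pos (by linarith)
        nlinarith
      have h3 : 0 ≤ (a - F*s) * s * (3*F - 4) :=
        mul_nonneg (mul_nonneg (by linarith) hs) (by linarith)
      have h4 : 0 ≤ s^2 * (2*F^2 - 7*F + 4) := by
        apply mul_nonneg (sq_nonneg s); nlinarith
      nlinarith [h1, h2, h3, h4, hs2]
    calc a^2 ≤ (F*s)^2 := by nlinarith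
      _ = F^2 * S := by rw [mul_pow, hs2]

private lemma lemII_aux (B k H' s : ℝ) (hB : 0 ≤ B) (hk : 1 ≤ k) (hH : 0 ≤ H') (hs : 0 ≤ s)
    (hHs : H' ≤ s) (hB2 : B^2 ≤ 2*s^2 + 2*H'^2) :
    0 ≤ (2*k*s)^2 - (B + k*H')*(2*k*s) + B^2/4 + H'^2 := by
  have hk0 : (0:ℝ) ≤ k := by linarith
  nlinarith [sq_nonneg (B - 2*s), sq_nonneg (k-1), mul_nonneg (sub_nonneg.2 hHs) hs,
    mul_nonneg (sub_nonneg.2 hk) hs, sq_nonneg (B - 2*k*s), sq_nonneg (s - H'),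
    mul_nonneg (mul_nonneg (sub_nonneg.2 hk) hs) hH, sq_nonneg (k*s - H'),
    mul_nonneg (mul_nonneg (sub_nonneg.2 hk) hs) hs,
    mul_nonneg (mul_nonneg (sub_nonneg.2 hk) (sub_nonneg.2 hk)) (mul_nonneg hs hs),
    mul_nonneg (mul_nonneg hk0 hs) (sub_nonneg.2 hHs)]

private lemma lemII (x G ρ k H' S : ℝ) (hx : 0 ≤ x) (hGnn : 0 ≤ G) (hρnn : 0 ≤ ρ)
    (hk : 1 ≤ k) (hH : 0 ≤ H') (hS : 0 ≤ S)
    (hρ2 : ρ^2 ≤ S + H'^2) (hG2 : G^2 ≤ 2*ρ^2)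
    (hmain : x^2 ≤ x*G + ρ^2/2 - G^2/2 + k*x*H' - H'^2) :
    x^2 ≤ 4*k^2 * max S (H'^2) := by
  have hk0 : (0:ℝ) ≤ k := by linarith
  set s := Real.sqrt (max S (H'^2)) with hsdef
  have hmaxnn : 0 ≤ max S (H'^2) := le_trans hS (le_max_left _ _)
  have hs : 0 ≤ s := Real.sqrt_nonneg _
  have hs2 : s^2 = max S (H'^2) := Real.sq_sqrt hmaxnn
  have hHs : H' ≤ s := le_of_sq_le' hH hs (by rw [hs2]; exact le_max_right _ _)
  have hSs : S ≤ s^2 := by rw [hs2]; exact le_max_left _ _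
  rw [← hs2]
  set B := Real.sqrt 2 * ρ with hBdef
  have hBnn : 0 ≤ B := mul_nonneg (Real.sqrt_nonneg _) hρnn
  have hB2 : B^2 = 2*ρ^2 := by
    rw [hBdef, mul_pow, Real.sq_sqrt (by norm_num : (0:ℝ) ≤ 2)]
  rcases le_total x B with hxB | hxB
  · have h1 : x^2 ≤ B^2 := by nlinarith
    nlinarith [mul_nonneg (mul_nonneg (by linarith : (0:ℝ) ≤ k-1) hk0) (mul_nonneg hs hs), sq_nonneg (k-1)]
  · have hGB : G ≤ B := le_of_sq_le' hGnn hBnn (by rw [hB2]; exact hG2)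
    have hq : x^2 - (B + k*H')*x + B^2/4 + H'^2 ≤ 0 := by
      have haux : x*G - G^2/2 ≤ x*B - B^2/2 := by
        nlinarith [mul_nonneg (sub_nonneg.2 hGB) (by linarith : 0 ≤ 2*x - B - G)]
      nlinarith [hmain, haux]
    have hB2' : B^2 ≤ 2*s^2 + 2*H'^2 := by nlinarith
    have hq0 := lemII_aux B k H' s hBnn hk hH hs hHs hB2'
    have hxle : x ≤ 2*k*s := by
      by_contra hc
      push_neg at hc
      have hBs : B ≤ 2*s := by
        apply le_of_sq_le' hBnn (by linarith)
        nlinarith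
      have hkH : k*H' ≤ k*s := mul_le_mul_of_nonneg_left hHs hk0
      have hks : s ≤ k*s := by nlinarith
      have hpos : 0 < (x - 2*k*s) * (x + 2*k*s - (B + k*H')) := by
        apply mul_pos (by linarith)
        have : 0 ≤ k*s := mul_nonneg hk0 hs
        linarith
      have hid : x^2 - (B + k*H')*x + B^2/4 + H'^2
          = ((2*k*s)^2 - (B + k*H')*(2*k*s) + B^2/4 + H'^2)
            + (x - 2*k*s) * (x + 2*k*s - (B + k*H')) := by ring
      linarith [hid ▸ hq]
    nlinarith [hxle, mul_nonneg (mul_nonneg hk0 hk0) (mul_nonneg hs hs)]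

private lemma lemIII (x G ρ H' S F : ℝ) (hx : 0 ≤ x) (hF : 4 ≤ F)
    (hH : 0 ≤ H') (hS : 0 ≤ S)
    (hρ2 : ρ^2 ≤ S + H'^2) (hG2 : G^2 ≤ 2*ρ^2)
    (hmain : x^2 ≤ x*G + ρ^2/2 - G^2/2 + F*H'^2/8) :
    x^2 ≤ max (2*F*S) (S + F^2*H'^2) := by
  have h1 : x^2 ≤ S + H'^2 + F*H'^2/4 := by nlinarith [sq_nonneg (x - G)]
  rcases le_total (2*F*S) (S + F^2*H'^2) with hmx | hmx
  · rw [max_eq_right hmx]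
    nlinarith [sq_nonneg H', mul_nonneg (sq_nonneg H') (by linarith : (0:ℝ) ≤ F)]
  · rw [max_eq_left hmx]
    nlinarith [mul_nonneg (sq_nonneg H') (by linarith : (0:ℝ) ≤ F),
      mul_nonneg hS (by linarith : (0:ℝ) ≤ F),
      mul_le_mul_of_nonneg_left hmx (by linarith : (0:ℝ) ≤ F)]

/-- **Deterministic loss equivalence to the oracle.** -/
theorem deterministic_loss_equivalence
    (n p : ℕ) (X : Matrix (Fin n) (Fin p) ℝ) (ε : Fin n → ℝ) (β : Fin p → ℝ)
    (g : (Fin p → ℝ) → ℝ) (hg : ConvexOn ℝ Set.univ g)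
    (Sig Ssq : Matrix (Fin p) (Fin p) ℝ) (hSig : Sig.PosDef)
    (hSsqPD : Ssq.PosDef) (hSsqSym : Ssqᵀ = Ssq) (hSsqSq : Ssq * Ssq = Sig)
    (σ μ : ℝ) (hσ : 0 < σ) (hμ0 : 0 ≤ μ) (hμhalf : μ ≤ 1 / 2)
    (y : Fin n → ℝ) (hy : y = X.mulVec β + ε)
    (bhat : Fin p → ℝ)
    (hbhat : IsMinOn
      (fun b => (∑ i, (y i - X.mulVec b i) ^ 2) / (2 * (n : ℝ)) + g b) Set.univ bhat)
    (bstar : Fin p → ℝ)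
    (hbstar : IsMinOn
      (fun b => (∑ i, Ssq.mulVec (β - b) i ^ 2) / 2 + g b) Set.univ bstar)
    (h hstar : Fin p → ℝ) (hh : h = bhat - β) (hhs : hstar = bstar - β)
    (Rst : ℝ) (hRst : Rst = σ ^ 2 + ∑ i, Ssq.mulVec hstar i ^ 2)
    -- `uᵀ(s − s*) ≥ μ‖Σ^{1/2}u‖²` for all `u` and subgradients `s ∈ ∂g(u + β*)`, `s* ∈ ∂g(β*)`
    (hμstrong : ∀ u s sstar : Fin p → ℝ,
      SubgradAt g s (u + bstar) → SubgradAt g sstar bstar →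
      μ * ∑ i, Ssq.mulVec u i ^ 2 ≤ ∑ j, u j * (s j - sstar j))
    (Fp : ℝ)
    (hFp : Fp = max ((∑ i, X.mulVec hstar i ^ 2) / ((n : ℝ) * ∑ i, Ssq.mulVec hstar i ^ 2))
      (max ((∑ i, ε i ^ 2) / (σ ^ 2 * (n : ℝ)))
        (max ((∑ i, (ε i - X.mulVec hstar i) ^ 2) / ((n : ℝ) * Rst)) 1)))
    (F : ℝ) (hF2 : 2 ≤ F)
    (hFalt : (∑ i, Ssq.mulVec h i ^ 2) ≤ F / 2 * ((∑ i, X.mulVec h i ^ 2) / (n : ℝ)) ∨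
      (0 < μ ∧ F = 2 / μ))
    (sbar2 : ℝ) (hsbar : sbar2 = (Fp - 1) * Rst + σ ^ 2) :
    -- (i)
    (((∑ i, Ssq.mulVec h i ^ 2) ≤ F ^ 2 * max sbar2 (∑ i, Ssq.mulVec hstar i ^ 2)) ∧
      F ^ 2 * max sbar2 (∑ i, Ssq.mulVec hstar i ^ 2) ≤ Fp * F ^ 2 * Rst) ∧
    -- (ii)
    (((∑ i, X.mulVec h i ^ 2) / (n : ℝ)
        ≤ max (2 * F * sbar2) (sbar2 + F ^ 2 * ∑ i, Ssq.mulVec hstar i ^ 2)) ∧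
      max (2 * F * sbar2) (sbar2 + F ^ 2 * ∑ i, Ssq.mulVec hstar i ^ 2)
        ≤ Fp * F ^ 2 * Rst) := by
  classical
  -- abbreviations
  set N : ℝ := (n : ℝ) with hNdef
  have hN0 : (0:ℝ) ≤ N := Nat.cast_nonneg n
  set Hh := ∑ i, Ssq.mulVec hstar i ^ 2 with hHhdef
  set P := ∑ i, Ssq.mulVec h i ^ 2 with hPdef
  set X2 := ∑ i, X.mulVec h i ^ 2 with hX2def
  set E2 := ∑ i, ε i ^ 2 with hE2def
  set D2 := ∑ i, X.mulVec hstar i ^ 2 with hD2def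
  set W2 := ∑ i, (ε i - X.mulVec hstar i) ^ 2 with hW2def
  set G2 := ∑ i, (ε i + X.mulVec hstar i) ^ 2 with hG2def
  have hHh0 : 0 ≤ Hh := Finset.sum_nonneg fun i _ => sq_nonneg _
  have hP0 : 0 ≤ P := Finset.sum_nonneg fun i _ => sq_nonneg _
  have hX20 : 0 ≤ X2 := Finset.sum_nonneg fun i _ => sq_nonneg _
  have hE20 : 0 ≤ E2 := Finset.sum_nonneg fun i _ => sq_nonneg _
  have hD20 : 0 ≤ D2 := Finset.sum_nonneg fun i _ => sq_nonneg _
  have hW20 : 0 ≤ W2 := Finset.sum_nonneg fun i _ => sq_nonneg _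
  have hG20 : 0 ≤ G2 := Finset.sum_nonneg fun i _ => sq_nonneg _
  have hσ2 : 0 < σ ^ 2 := pow_pos hσ 2
  have hRst0 : 0 < Rst := by rw [hRst]; linarith
  have hFp1 : 1 ≤ Fp := by
    rw [hFp]
    exact le_trans (le_max_right _ _) (le_trans (le_max_right _ _) (le_max_right _ _))
  have hsbar0 : 0 < sbar2 := by
    rw [hsbar]
    nlinarith only [mul_nonneg (by linarith only [hFp1] : (0:ℝ) ≤ Fp - 1) (le_of_lt hRst0), hσ2]
  have hFpRst : Fp * Rst = sbar2 + Hh := by rw [hsbar, hRst]; ring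
  have hF0 : (0:ℝ) < F := by linarith
  -- the estimator residual vector
  set u : Fin p → ℝ := bhat - bstar with hudef
  set SA := ∑ i, Ssq.mulVec u i ^ 2 with hSAdef
  have hSA0 : 0 ≤ SA := Finset.sum_nonneg fun i _ => sq_nonneg _
  set SH := ∑ i, Ssq.mulVec h i * Ssq.mulVec hstar i with hSHdef
  have hu_hs : h - hstar = u := by
    rw [hh, hhs, hudef]; exact sub_sub_sub_cancel_right _ _ _
  have hginv : h = u + hstar := by rw [← hu_hs]; exact (sub_add_cancel h hstar).symm
  have hXh_i : ∀ i, X.mulVec h i = X.mulVec u i + X.mulVec hstar i := by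
    intro i
    conv_lhs => rw [hginv]
    rw [mulVec_add]; rfl
  have hSh_i : ∀ i, Ssq.mulVec h i = Ssq.mulVec u i + Ssq.mulVec hstar i := by
    intro i
    conv_lhs => rw [hginv]
    rw [mulVec_add]; rfl
  have hv_i : ∀ i, y i - X.mulVec bhat i = ε i - X.mulVec h i := by
    intro i
    have h1 : X.mulVec h = X.mulVec bhat - X.mulVec β := by
      rw [hh, mulVec_sub]
    have h2 : X.mulVec h i = X.mulVec bhat i - X.mulVec β i := by rw [h1]; rfl
    rw [hy]
    simp only [Pi.add_apply]
    linarith [h2]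
  -- empirical subgradient
  set v : Fin n → ℝ := fun i => y i - X.mulVec bhat i with hvdef
  set shat : Fin p → ℝ := fun j => (v ᵥ* X) j / N with hshatdef
  have hsub1 : SubgradAt g shat bhat := by
    apply subgradAt_of_isMinOn hg
      (fun b => (∑ i, (y i - X.mulVec b i) ^ 2) / (2 * N))
      (fun dd => (∑ i, X.mulVec dd i ^ 2) / (2 * N)) bhat shat
    · intro dd
      exact div_nonneg (Finset.sum_nonneg fun i _ => sq_nonneg _) (by linarith)
    · intro dd t ht0 ht1
      have h1 : ∀ i, y i - X.mulVec (bhat + t • dd) i = v i - t * X.mulVec dd i := by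
        intro i
        rw [mulVec_add, mulVec_smul]
        simp only [hvdef, Pi.add_apply, Pi.smul_apply, smul_eq_mul]
        ring
      have h2 : (∑ i, (y i - X.mulVec (bhat + t • dd) i) ^ 2)
          = (∑ i, v i ^ 2) - 2*t*(∑ i, v i * X.mulVec dd i) + t^2*(∑ i, X.mulVec dd i ^ 2) := by
        calc (∑ i, (y i - X.mulVec (bhat + t • dd) i) ^ 2)
            = ∑ i, (v i ^ 2 - 2*t*(v i * X.mulVec dd i) + t^2 * X.mulVec dd i ^ 2) :=
              Finset.sum_congr rfl fun i _ => by rw [h1 i]; ring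
          _ = _ := by
              rw [Finset.sum_add_distrib, Finset.sum_sub_distrib, ← Finset.mul_sum, ← Finset.mul_sum]
      have hdot : ∑ j, shat j * dd j = (∑ i, v i * X.mulVec dd i)/N := by
        simp only [hshatdef]
        rw [show (∑ j, (v ᵥ* X) j / N * dd j) = (∑ j, ((v ᵥ* X) j * dd j) / N) from
          Finset.sum_congr rfl fun j _ => by ring, ← Finset.sum_div]
        congr 1
        rw [show (∑ j, (v ᵥ* X) j * dd j) = (v ᵥ* X) ⬝ᵥ dd from rfl,
            show (∑ i, v i * X.mulVec dd i) = v ⬝ᵥ (X *ᵥ dd) from rfl,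
            Matrix.dotProduct_mulVec]
      have hvv : (∑ i, (y i - X.mulVec bhat i) ^ 2) = ∑ i, v i ^ 2 := rfl
      rw [h2, hdot, hvv]
      apply le_of_eq
      have hmid : 2*t*(∑ i, v i * X.mulVec dd i) / (2*N) = t * ((∑ i, v i * X.mulVec dd i) / N) := by
        rw [show 2*t*(∑ i, v i * X.mulVec dd i) = 2*(t*(∑ i, v i * X.mulVec dd i)) from by ring,
            mul_div_mul_left _ _ (by norm_num : (2:ℝ) ≠ 0), mul_div_assoc]
      rw [add_div, sub_div, mul_div_assoc (t^2), hmid]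
    · exact hbhat
  -- population subgradient
  set sstar : Fin p → ℝ := Sig.mulVec (β - bstar) with hsstardef
  have hsub2 : SubgradAt g sstar bstar := by
    apply subgradAt_of_isMinOn hg
      (fun b => (∑ i, Ssq.mulVec (β - b) i ^ 2) / 2)
      (fun dd => (∑ i, Ssq.mulVec dd i ^ 2) / 2) bstar sstar
    · intro dd
      exact div_nonneg (Finset.sum_nonneg fun i _ => sq_nonneg _) (by norm_num)
    · intro dd t ht0 ht1
      have h1 : ∀ i, Ssq.mulVec (β - (bstar + t • dd)) i
          = Ssq.mulVec (β - bstar) i - t * Ssq.mulVec dd i := by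
        intro i
        have hfun : β - (bstar + t • dd) = (β - bstar) - t • dd := by
          funext j
          simp only [Pi.sub_apply, Pi.add_apply, Pi.smul_apply, smul_eq_mul]
          ring
        rw [hfun, mulVec_sub, mulVec_smul]
        simp only [Pi.sub_apply, Pi.smul_apply, smul_eq_mul]
      have h2 : (∑ i, Ssq.mulVec (β - (bstar + t • dd)) i ^ 2)
          = (∑ i, Ssq.mulVec (β - bstar) i ^ 2)
            - 2*t*(∑ i, Ssq.mulVec (β - bstar) i * Ssq.mulVec dd i)
            + t^2*(∑ i, Ssq.mulVec dd i ^ 2) := by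
        calc (∑ i, Ssq.mulVec (β - (bstar + t • dd)) i ^ 2)
            = ∑ i, (Ssq.mulVec (β - bstar) i ^ 2
                - 2*t*(Ssq.mulVec (β - bstar) i * Ssq.mulVec dd i)
                + t^2 * Ssq.mulVec dd i ^ 2) :=
              Finset.sum_congr rfl fun i _ => by rw [h1 i]; ring
          _ = _ := by
              rw [Finset.sum_add_distrib, Finset.sum_sub_distrib, ← Finset.mul_sum, ← Finset.mul_sum]
      have hdot : ∑ j, sstar j * dd j
          = ∑ i, Ssq.mulVec (β - bstar) i * Ssq.mulVec dd i := by
        simp only [hsstardef]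
        rw [show (∑ j, Sig.mulVec (β - bstar) j * dd j) = (Sig *ᵥ (β - bstar)) ⬝ᵥ dd from rfl,
            show (∑ i, Ssq.mulVec (β - bstar) i * Ssq.mulVec dd i)
              = (Ssq *ᵥ (β - bstar)) ⬝ᵥ (Ssq *ᵥ dd) from rfl,
            ← hSsqSq, ← Matrix.mulVec_mulVec, Matrix.dotProduct_mulVec]
        congr 1
        rw [← hSsqSym, Matrix.vecMul_transpose, hSsqSym]
      rw [h2, hdot]
      apply le_of_eq
      ring
    · exact hbstar
  -- the key inequality from strong monotonicity
  have hbsum : u + bstar = bhat := by rw [hudef]; exact sub_add_cancel bhat bstar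
  have hsub1' : SubgradAt g shat (u + bstar) := by rw [hbsum]; exact hsub1
  have key0 := hμstrong u shat sstar hsub1' hsub2
  set T1 := ∑ i, X.mulVec u i * (ε i - X.mulVec h i) with hT1def
  set T2 := ∑ i, Ssq.mulVec u i * Ssq.mulVec hstar i with hT2def
  have hdot1 : (∑ j, u j * shat j) = T1 / N := by
    simp only [hshatdef]
    rw [show (∑ j, u j * ((v ᵥ* X) j / N)) = (∑ j, (u j * (v ᵥ* X) j) / N) from
      Finset.sum_congr rfl fun j _ => by ring, ← Finset.sum_div]
    congr 1
    rw [hT1def]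
    rw [show (∑ j, u j * (v ᵥ* X) j) = u ⬝ᵥ (v ᵥ* X) from rfl, dotProduct_comm,
        ← Matrix.dotProduct_mulVec]
    rw [show v ⬝ᵥ (X *ᵥ u) = ∑ i, v i * (X *ᵥ u) i from rfl]
    exact Finset.sum_congr rfl fun i _ => by
      rw [show v i = y i - X.mulVec bhat i from rfl, hv_i i]; ring
  have hβb : β - bstar = -hstar := by rw [hhs]; exact (neg_sub bstar β).symm
  have hdot2 : (∑ j, u j * sstar j) = -T2 := by
    simp only [hsstardef]
    have hmv : Sig.mulVec (β - bstar) = -(Sig.mulVec hstar) := by rw [hβb, mulVec_neg]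
    rw [hmv]
    rw [show (∑ j, u j * (-(Sig *ᵥ hstar)) j) = -(∑ j, u j * (Sig *ᵥ hstar) j) from by
      rw [← Finset.sum_neg_distrib]
      exact Finset.sum_congr rfl fun j _ => by simp]
    congr 1
    rw [hT2def]
    rw [show (∑ j, u j * (Sig *ᵥ hstar) j) = u ⬝ᵥ (Sig *ᵥ hstar) from rfl,
        show (∑ i, Ssq.mulVec u i * Ssq.mulVec hstar i) = (Ssq *ᵥ u) ⬝ᵥ (Ssq *ᵥ hstar) from rfl,
        ← hSsqSq, ← Matrix.mulVec_mulVec, Matrix.dotProduct_mulVec]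
    congr 1
    rw [← hSsqSym, Matrix.vecMul_transpose, hSsqSym]
  have keyA : μ * SA ≤ T1 / N + T2 := by
    have hsplit : (∑ j, u j * (shat j - sstar j)) = T1/N + T2 := by
      rw [show (∑ j, u j * (shat j - sstar j)) = (∑ j, u j * shat j) - ∑ j, u j * sstar j from by
        rw [← Finset.sum_sub_distrib]
        exact Finset.sum_congr rfl fun j _ => by ring,
        hdot1, hdot2]
      ring
    rw [hsplit] at key0
    exact key0
  have hsu_i : ∀ i, Ssq.mulVec u i = Ssq.mulVec h i - Ssq.mulVec hstar i :=
    fun i => by rw [hSh_i i]; ring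
  have hT2SH : T2 = SH - Hh := by
    rw [hT2def, hSHdef, hHhdef, ← Finset.sum_sub_distrib]
    exact Finset.sum_congr rfl fun i _ => by rw [hsu_i i]; ring
  have hSAeq : SA = P - 2*SH + Hh := by
    rw [hSAdef, hPdef, hSHdef, hHhdef]
    calc (∑ i, Ssq.mulVec u i ^ 2)
        = ∑ i, (Ssq.mulVec h i^2 - 2*(Ssq.mulVec h i * Ssq.mulVec hstar i)
            + Ssq.mulVec hstar i^2) :=
          Finset.sum_congr rfl fun i _ => by rw [hsu_i i]; ring
      _ = _ := by
          rw [Finset.sum_add_distrib, Finset.sum_sub_distrib, ← Finset.mul_sum]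
  set aP := Real.sqrt P with haPdef
  set H' := Real.sqrt Hh with hH'def
  have haP0 : 0 ≤ aP := Real.sqrt_nonneg _
  have hH'0 : 0 ≤ H' := Real.sqrt_nonneg _
  have haP2 : aP^2 = P := Real.sq_sqrt hP0
  have hH'2 : H'^2 = Hh := Real.sq_sqrt hHh0
  have hSH_CS : SH ≤ aP * H' := by
    rw [hSHdef, haPdef, hH'def, hPdef, hHhdef]
    exact sumCS _ _
  have hSAge : (aP - H')^2 ≤ SA := by nlinarith only [hSH_CS, haP2, hH'2, hSAeq]
  have hzero : n = 0 → ∀ (f : Fin n → ℝ), (∑ i, f i) = 0 := by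
    intro hn f
    haveI : IsEmpty (Fin n) := by subst hn; infer_instance
    rw [Finset.univ_eq_empty, Finset.sum_empty]
  have hT2val : T2 = (P - SA - Hh)/2 := by rw [hT2SH, hSAeq]; ring
  have hM1 : (1+2*μ)*SA ≤ P + sbar2/2 - Hh/2 := by
    have hT1N : T1/N ≤ (sbar2+Hh)/4 := by
      rcases Nat.eq_zero_or_pos n with hn | hn
      · have hz : T1 = 0 := by rw [hT1def]; exact hzero hn _
        rw [hz, zero_div]
        linarith only [hsbar0, hHh0]
      · have hNpos : 0 < N := by rw [hNdef]; exact_mod_cast hn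
        have hW2b : W2 ≤ N * (sbar2+Hh) := by
          have h1 : W2/(N*Rst) ≤ Fp := by
            rw [hFp]
            exact le_trans (le_max_left _ _) (le_trans (le_max_right _ _) (le_max_right _ _))
          rw [div_le_iff₀ (mul_pos hNpos hRst0)] at h1
          calc W2 ≤ Fp*(N*Rst) := h1
            _ = N*(Fp*Rst) := by ring
            _ = N*(sbar2+Hh) := by rw [hFpRst]
        have hQA0 : 0 ≤ (∑ i, X.mulVec u i ^2) := Finset.sum_nonneg fun i _ => sq_nonneg _
        have hT1split : T1 = (∑ i, X.mulVec u i * (ε i - X.mulVec hstar i))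
            - (∑ i, X.mulVec u i ^2) := by
          rw [hT1def, ← Finset.sum_sub_distrib]
          exact Finset.sum_congr rfl fun i _ => by
            rw [show ε i - X.mulVec h i = (ε i - X.mulVec hstar i) - X.mulVec u i from by
              rw [hXh_i i]; ring]
            ring
        have hCS : (∑ i, X.mulVec u i * (ε i - X.mulVec hstar i))
            ≤ Real.sqrt (∑ i, X.mulVec u i ^2) * Real.sqrt W2 := by
          rw [hW2def]; exact sumCS _ _
        have hT1W : T1 ≤ W2/4 := by
          have h1 : Real.sqrt (∑ i, X.mulVec u i ^2) ^2 = (∑ i, X.mulVec u i ^2) :=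
            Real.sq_sqrt hQA0
          have h2 : Real.sqrt W2 ^2 = W2 := Real.sq_sqrt hW20
          nlinarith only [sq_nonneg (Real.sqrt (∑ i, X.mulVec u i ^2) - Real.sqrt W2/2), hT1split, hCS, h1, h2]
        rw [div_le_iff₀ hNpos]
        calc T1 ≤ W2/4 := hT1W
          _ ≤ (N*(sbar2+Hh))/4 := by linarith only [hW2b]
          _ = (sbar2+Hh)/4*N := by ring
    linarith only [keyA, hT1N, hT2val]
  set x := Real.sqrt (X2/N) with hxdef
  set Gq := Real.sqrt (G2/N) with hGqdef
  set ρ := Real.sqrt ((E2+D2)/N) with hρdef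
  have hx0 : 0 ≤ x := Real.sqrt_nonneg _
  have hGq0 : 0 ≤ Gq := Real.sqrt_nonneg _
  have hρ0 : 0 ≤ ρ := Real.sqrt_nonneg _
  have hx2 : x^2 = X2/N := Real.sq_sqrt (div_nonneg hX20 hN0)
  have hGq2 : Gq^2 = G2/N := Real.sq_sqrt (div_nonneg hG20 hN0)
  have hρ2 : ρ^2 = (E2+D2)/N :=
    Real.sq_sqrt (div_nonneg (by linarith only [hE20, hD20]) hN0)
  have hρcon : 0 < N → ρ^2 ≤ sbar2 + H'^2 := by
    intro hNpos
    have hE2b : E2 ≤ Fp*(σ^2*N) := by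
      have h1 : E2/(σ^2*N) ≤ Fp := by
        rw [hFp]
        exact le_trans (le_max_left _ _) (le_max_right _ _)
      rwa [div_le_iff₀ (mul_pos hσ2 hNpos)] at h1
    have hD2b : D2 ≤ Fp*(N*Hh) := by
      rcases eq_or_lt_of_le hHh0 with hHz | hHpos
      · have hsum0 : (∑ i, Ssq.mulVec hstar i ^ 2) = 0 := by rw [← hHhdef]; exact hHz.symm
        have hall := (Finset.sum_eq_zero_iff_of_nonneg
          (fun i _ => sq_nonneg (Ssq.mulVec hstar i))).mp hsum0
        have hss0 : Ssq.mulVec hstar = 0 :=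
          funext fun i => sq_eq_zero_iff.mp (hall i (Finset.mem_univ i))
        have hst0 : hstar = 0 := by
          by_contra hne
          have hpos := (Matrix.posDef_iff_dotProduct_mulVec.mp hSsqPD).2 hne
          rw [hss0] at hpos
          simp at hpos
        have hD2z : D2 = 0 := by rw [hD2def, hst0]; simp
        rw [hD2z, ← hHz]
        simp
      · have h1 : D2/(N*Hh) ≤ Fp := by rw [hFp]; exact le_max_left _ _
        rwa [div_le_iff₀ (mul_pos hNpos hHpos)] at h1
    rw [hρ2, hH'2, div_le_iff₀ hNpos]
    calc E2 + D2 ≤ Fp*(σ^2*N) + Fp*(N*Hh) := by linarith only [hE2b, hD2b]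
      _ = (Fp*Rst)*N := by rw [hRst]; ring
      _ = (sbar2+Hh)*N := by rw [hFpRst]
  have hGcon : Gq^2 ≤ 2*ρ^2 := by
    have hG2b : G2 ≤ 2*(E2+D2) := by
      rw [hG2def, hE2def, hD2def]
      calc (∑ i, (ε i + X.mulVec hstar i)^2)
          ≤ ∑ i, (2*ε i^2 + 2*X.mulVec hstar i^2) :=
            Finset.sum_le_sum fun i _ => by nlinarith only [sq_nonneg (ε i - X.mulVec hstar i)]
        _ = 2*(∑ i, ε i^2) + 2*(∑ i, X.mulVec hstar i^2) := by
            rw [Finset.sum_add_distrib, ← Finset.mul_sum, ← Finset.mul_sum]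
        _ = 2*((∑ i, ε i^2) + (∑ i, X.mulVec hstar i^2)) := by ring
    rw [hGq2, hρ2, show (2:ℝ)*((E2+D2)/N) = (2*(E2+D2))/N from by ring]
    exact div_le_div_of_nonneg_right hG2b hN0
  have hmaster : 0 < N → X2/N ≤ x*Gq + ρ^2/2 - Gq^2/2 + (T2 - μ*SA) := by
    intro hNpos
    have hNne : N ≠ 0 := ne_of_gt hNpos
    have hxe : (∑ i, X.mulVec hstar i * ε i) = (G2 - E2 - D2)/2 := by
      have hG2e : G2 = E2 + 2*(∑ i, X.mulVec hstar i * ε i) + D2 := by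
        rw [hG2def, hE2def, hD2def]
        calc (∑ i, (ε i + X.mulVec hstar i)^2)
            = ∑ i, (ε i^2 + 2*(X.mulVec hstar i * ε i) + X.mulVec hstar i^2) :=
              Finset.sum_congr rfl fun i _ => by ring
          _ = _ := by rw [Finset.sum_add_distrib, Finset.sum_add_distrib, ← Finset.mul_sum]
      linarith only [hG2e]
    have hT1split2 : T1 = (∑ i, X.mulVec h i * (ε i + X.mulVec hstar i)) - X2
        - (∑ i, X.mulVec hstar i * ε i) := by
      rw [hT1def, hX2def]
      rw [show (∑ i, X.mulVec h i * (ε i + X.mulVec hstar i)) - (∑ i, X.mulVec h i ^2)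
          - (∑ i, X.mulVec hstar i * ε i)
          = ∑ i, (X.mulVec h i * (ε i + X.mulVec hstar i) - X.mulVec h i^2
              - X.mulVec hstar i * ε i) from by
        rw [Finset.sum_sub_distrib, Finset.sum_sub_distrib]]
      exact Finset.sum_congr rfl fun i _ => by
        rw [show X.mulVec u i = X.mulVec h i - X.mulVec hstar i from by rw [hXh_i i]; ring]
        ring
    have hCS2 : (∑ i, X.mulVec h i * (ε i + X.mulVec hstar i))
        ≤ Real.sqrt X2 * Real.sqrt G2 := by
      rw [hX2def, hG2def]; exact sumCS _ _
    have hsX : Real.sqrt X2 = x * Real.sqrt N := by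
      rw [hxdef, ← Real.sqrt_mul (div_nonneg hX20 hN0), div_mul_cancel₀ _ hNne]
    have hsG : Real.sqrt G2 = Gq * Real.sqrt N := by
      rw [hGqdef, ← Real.sqrt_mul (div_nonneg hG20 hN0), div_mul_cancel₀ _ hNne]
    have hNN : Real.sqrt N * Real.sqrt N = N := Real.mul_self_sqrt hN0
    have hCS2' : (∑ i, X.mulVec h i * (ε i + X.mulVec hstar i)) ≤ x*Gq*N := by
      calc (∑ i, X.mulVec h i * (ε i + X.mulVec hstar i))
          ≤ Real.sqrt X2 * Real.sqrt G2 := hCS2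
        _ = x*Gq*(Real.sqrt N * Real.sqrt N) := by rw [hsX, hsG]; ring
        _ = x*Gq*N := by rw [hNN]
    have hT1Nv : T1/N ≤ x*Gq - X2/N + (E2+D2)/(2*N) - G2/(2*N) := by
      rw [hT1split2, hxe, sub_div, sub_div]
      have e1 : (∑ i, X.mulVec h i * (ε i + X.mulVec hstar i))/N ≤ x*Gq := by
        rw [div_le_iff₀ hNpos]; exact hCS2'
      have e2 : ((G2 - E2 - D2)/2)/N = G2/(2*N) - (E2+D2)/(2*N) := by
        rw [div_div, sub_div, sub_div, add_div]
        ring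
      rw [e2]
      linarith only [e1]
    have hfin : μ*SA ≤ x*Gq - X2/N + (E2+D2)/(2*N) - G2/(2*N) + T2 :=
      le_trans keyA (by linarith only [hT1Nv])
    have e3 : (E2+D2)/(2*N) = ρ^2/2 := by rw [hρ2, div_div, mul_comm]
    have e4 : G2/(2*N) = Gq^2/2 := by rw [hGq2, div_div, mul_comm]
    linarith only [hfin, e3, e4]
  set k := Real.sqrt (F/2) with hkdef
  have hk0 : 0 ≤ k := Real.sqrt_nonneg _
  have hk2 : k^2 = F/2 := Real.sq_sqrt (by linarith only [hF0])
  have hMx0 : 0 ≤ max sbar2 Hh := le_trans (le_of_lt hsbar0) (le_max_left _ _)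
  have hFact : P ≤ F^2 * max sbar2 Hh ∧ X2/N ≤ max (2*F*sbar2) (sbar2 + F^2*Hh) := by
    rcases hFalt with hc1 | ⟨hμpos, hFμ⟩
    · rcases Nat.eq_zero_or_pos n with hn | hn
      · have hX2z : X2 = 0 := by rw [hX2def]; exact hzero hn _
        rw [hX2z, zero_div, mul_zero] at hc1
        constructor
        · calc P ≤ 0 := hc1
            _ ≤ F^2 * max sbar2 Hh := mul_nonneg (sq_nonneg F) hMx0
        · rw [hX2z, zero_div]
          exact le_trans (le_of_lt (by nlinarith only [mul_pos hF0 hsbar0] : (0:ℝ) < 2*F*sbar2))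
            (le_max_left _ _)
      · have hNpos : 0 < N := by rw [hNdef]; exact_mod_cast hn
        have hm := hmaster hNpos
        have haPk : aP ≤ k*x := by
          apply le_of_sq_le' haP0 (mul_nonneg hk0 hx0)
          rw [haP2, mul_pow, hk2, hx2]
          exact hc1
        have hT2b : T2 - μ*SA ≤ k*x*H' - H'^2 := by
          have h1 : T2 ≤ aP*H' - Hh := by
            rw [hT2SH]
            nlinarith only [hSH_CS]
          have h2 : aP*H' ≤ k*x*H' := mul_le_mul_of_nonneg_right haPk hH'0
          have h3 : 0 ≤ μ*SA := mul_nonneg hμ0 hSA0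
          linarith only [h1, h2, h3, hH'2]
        have hmain : x^2 ≤ x*Gq + ρ^2/2 - Gq^2/2 + k*x*H' - H'^2 := by
          rw [hx2]
          linarith only [hm, hT2b]
        have hk1 : 1 ≤ k := by
          apply le_of_sq_le' zero_le_one hk0
          rw [hk2]; nlinarith only [hF2]
        have hII := lemII x Gq ρ k H' sbar2 hx0 hGq0 hρ0 hk1 hH'0 (le_of_lt hsbar0)
          (hρcon hNpos) hGcon hmain
        rw [hH'2, show (4:ℝ)*k^2 = 2*F from by rw [hk2]; ring, hx2] at hII
        constructor
        · calc P ≤ F/2*(X2/N) := hc1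
            _ ≤ F/2*(2*F*max sbar2 Hh) :=
              mul_le_mul_of_nonneg_left hII (by linarith only [hF0])
            _ = F^2 * max sbar2 Hh := by ring
        · rcases le_total sbar2 Hh with hcm | hcm
          · rw [max_eq_right hcm] at hII
            refine le_trans hII (le_trans ?_ (le_max_right _ _))
            nlinarith only [hF2, hHh0, hsbar0, mul_nonneg (mul_nonneg (by linarith only [hF0] : (0:ℝ) ≤ F) (by linarith only [hF2] : (0:ℝ) ≤ F - 2)) hHh0]
          · rw [max_eq_left hcm] at hII
            exact le_trans hII (le_max_left _ _)
    · have hμne : μ ≠ 0 := ne_of_gt hμpos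
      have hμeq : μ * F = 2 := by rw [hFμ]; field_simp
      have hF4 : 4 ≤ F := by nlinarith only [hμpos, hμhalf, hμeq]
      constructor
      · have hlem : (F+4)*(aP - H')^2 ≤ F*P + F*sbar2/2 - F*Hh/2 := by
          have h1 : (F+4)*(aP-H')^2 ≤ (F+4)*SA :=
            mul_le_mul_of_nonneg_left hSAge (by linarith only [hF4])
          have h2 : (F+4)*SA = F*((1+2*μ)*SA) := by
            rw [show F*((1+2*μ)*SA) = (F + 2*(μ*F))*SA from by ring, hμeq]
            norm_num
          have h3 : F*((1+2*μ)*SA) ≤ F*(P + sbar2/2 - Hh/2) :=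
            mul_le_mul_of_nonneg_left hM1 (le_of_lt hF0)
          calc (F+4)*(aP-H')^2 ≤ F*(P + sbar2/2 - Hh/2) := by
                rw [← h2] at h3; linarith only [h1, h3]
            _ = F*P + F*sbar2/2 - F*Hh/2 := by ring
        have hlem' : (F+4)*(aP - H')^2 ≤ F*aP^2 + F*sbar2/2 - F*H'^2/2 := by
          rw [haP2, hH'2]; exact hlem
        have hI := lemI F aP H' sbar2 hF4 haP0 hH'0 (le_of_lt hsbar0) hlem'
        rw [haP2, hH'2] at hI
        exact hI
      · rcases Nat.eq_zero_or_pos n with hn | hn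
        · have hX2z : X2 = 0 := by rw [hX2def]; exact hzero hn _
          rw [hX2z, zero_div]
          exact le_trans (le_of_lt (by nlinarith only [mul_pos hF0 hsbar0] : (0:ℝ) < 2*F*sbar2))
            (le_max_left _ _)
        · have hNpos : 0 < N := by rw [hNdef]; exact_mod_cast hn
          have hm := hmaster hNpos
          have hT2c : T2 - μ*SA ≤ F*H'^2/8 := by
            have h1 : T2 ≤ aP*H' - Hh := by rw [hT2SH]; nlinarith only [hSH_CS]
            have h2 : μ*(aP - H')^2 ≤ μ*SA := mul_le_mul_of_nonneg_left hSAge hμ0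
            have h3 : F*(aP*H' - H'^2 - μ*(aP-H')^2) ≤ F*(F*H'^2/8) := by
              have hexp : F*(aP*H' - H'^2 - μ*(aP-H')^2)
                  = F*aP*H' - F*H'^2 - 2*(aP-H')^2 := by
                linear_combination (-(aP-H')^2) * hμeq
              rw [hexp]
              nlinarith only [sq_nonneg (4*aP - (F+4)*H')]
            have h4 : aP*H' - H'^2 - μ*(aP-H')^2 ≤ F*H'^2/8 :=
              le_of_mul_le_mul_left (by linarith only [h3]) hF0
            linarith only [h1, h2, h4, hH'2]
          have hmain : x^2 ≤ x*Gq + ρ^2/2 - Gq^2/2 + F*H'^2/8 := by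
            rw [hx2]
            linarith only [hm, hT2c]
          have hIII := lemIII x Gq ρ H' sbar2 F hx0 hF4 hH'0 (le_of_lt hsbar0)
            (hρcon hNpos) hGcon hmain
          rw [hx2, hH'2] at hIII
          exact hIII
  refine ⟨⟨hFact.1, ?_⟩, hFact.2, ?_⟩
  · calc F^2 * max sbar2 Hh ≤ F^2 * (sbar2 + Hh) :=
        mul_le_mul_of_nonneg_left
          (max_le (by linarith only [hHh0]) (by linarith only [hsbar0])) (sq_nonneg F)
      _ = Fp * F^2 * Rst := by rw [← hFpRst]; ring
  · rw [show Fp * F^2 * Rst = F^2*(sbar2+Hh) from by rw [← hFpRst]; ring]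
    apply max_le
    · nlinarith only [hF2, hsbar0, hHh0,
        mul_nonneg (mul_nonneg (by linarith only [hF0] : (0:ℝ) ≤ F)
          (by linarith only [hF2] : (0:ℝ) ≤ F - 2)) (le_of_lt hsbar0),
        mul_nonneg (sq_nonneg F) hHh0]
    · nlinarith only [hsbar0, hHh0,
        mul_nonneg (by nlinarith only [hF2] : (0:ℝ) ≤ F^2 - 1) (le_of_lt hsbar0)]




end
end

section
/- Deterministic lower bound on the normalized residual: In the setting of the deterministic loss-equivalence lemma (y = Xβ + ε, g convex, β̂ a minimizer of b ↦ ‖y − Xb‖²/(2n) + g(b), h = β̂ − β, β* = argmin_b {‖Σ^{1/2}(β − b)‖²/2 + g(b)}, h* = β* − β, R* = σ² + ‖Σ^{1/2}h*‖², and F₊ = max{ ‖Xh*‖²/(n‖Σ^{1/2}h*‖²), ‖ε‖²/(σ²n), ‖ε − Xh*‖²/(nR*), 1 }), let d be any real with 0 ≤ d ≤ n (in the paper, d = d̂f = tr(Ĥ) ∈ [0, n]), let g* = Xh*/‖Σ^{1/2}h*‖ and a* = Σh*/‖Σ^{1/2}h*‖, and define the nonnegative quantities Δa = σ²|(1 −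 d/n) − εᵀ(y − Xβ̂)/(nσ²)|²/R*, Δb = max(F₊ − 1, 0)·‖y − Xβ̂‖²/(nR*), Δc = |(1 − d/n)⟨a*, h⟩ − g*ᵀ(Xβ̂ − y)/n|²/R*. Then (1 − d/n)²/8 ≤ ‖y − Xβ̂‖²/(nR*) + Δa + Δb + Δc. -/
open Matrix
open scoped Topology

noncomputable section

/-- If `a ≥ -(t*c)` for all small positive `t`, then `a ≥ 0`. -/
lemma aux_nonneg_of_forall (a c : ℝ) (hc : 0 ≤ c)
    (H : ∀ t : ℝ, 0 < t → t ≤ 1 → -(t * c) ≤ a) : 0 ≤ a := by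
  rcases eq_or_lt_of_le hc with hc0 | hc0
  · have h1 := H 1 one_pos le_rfl
    simpa [← hc0] using h1
  · by_contra ha
    push_neg at ha
    have htpos : 0 < min 1 (-a / (2 * c)) :=
      lt_min one_pos (div_pos (by linarith) (by linarith))
    have h2 := H _ htpos (min_le_left _ _)
    have h3 : min 1 (-a / (2 * c)) * c ≤ (-a / (2 * c)) * c :=
      mul_le_mul_of_nonneg_right (min_le_right _ _) hc
    have h4 : (-a / (2 * c)) * c = -a / 2 := by
      field_simp
    linarith

lemma sum_sq_expand_sub {m : ℕ} (a b : Fin m → ℝ) (t : ℝ) :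
    ∑ i, (a i - t * b i) ^ 2
      = (∑ i, a i ^ 2) - 2 * t * (∑ i, a i * b i) + t ^ 2 * ∑ i, b i ^ 2 := by
  rw [Finset.mul_sum, Finset.mul_sum, ← Finset.sum_sub_distrib, ← Finset.sum_add_distrib]
  exact Finset.sum_congr rfl fun i _ => by ring

lemma sum_sq_expand_add {m : ℕ} (a b : Fin m → ℝ) (t : ℝ) :
    ∑ i, (a i + t * b i) ^ 2
      = (∑ i, a i ^ 2) + 2 * t * (∑ i, a i * b i) + t ^ 2 * ∑ i, b i ^ 2 := by
  rw [Finset.mul_sum, Finset.mul_sum, ← Finset.sum_add_distrib, ← Finset.sum_add_distrib]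
  exact Finset.sum_congr rfl fun i _ => by ring

set_option maxHeartbeats 2000000 in
/-- **Deterministic lower bound on the normalized residual.** -/
theorem deterministic_residual_lower_bound
    (n p : ℕ) (X : Matrix (Fin n) (Fin p) ℝ) (ε : Fin n → ℝ) (β : Fin p → ℝ)
    (g : (Fin p → ℝ) → ℝ) (hg : ConvexOn ℝ Set.univ g)
    (Sig Ssq : Matrix (Fin p) (Fin p) ℝ) (hSig : Sig.PosDef)
    (hSsqPD : Ssq.PosDef) (hSsqSym : Ssqᵀ = Ssq) (hSsqSq : Ssq * Ssq = Sig)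
    (σ : ℝ) (hσ : 0 < σ)
    (y : Fin n → ℝ) (hy : y = X.mulVec β + ε)
    (bhat : Fin p → ℝ)
    (hbhat : IsMinOn
      (fun b => (∑ i, (y i - X.mulVec b i) ^ 2) / (2 * (n : ℝ)) + g b) Set.univ bhat)
    (bstar : Fin p → ℝ)
    (hbstar : IsMinOn
      (fun b => (∑ i, Ssq.mulVec (β - b) i ^ 2) / 2 + g b) Set.univ bstar)
    (h hstar : Fin p → ℝ) (hh : h = bhat - β) (hhs : hstar = bstar - β)
    (Rst : ℝ) (hRst : Rst = σ ^ 2 + ∑ i, Ssq.mulVec hstar i ^ 2)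
    (Fp : ℝ)
    (hFp : Fp = max ((∑ i, X.mulVec hstar i ^ 2) / ((n : ℝ) * ∑ i, Ssq.mulVec hstar i ^ 2))
      (max ((∑ i, ε i ^ 2) / (σ ^ 2 * (n : ℝ)))
        (max ((∑ i, (ε i - X.mulVec hstar i) ^ 2) / ((n : ℝ) * Rst)) 1)))
    (d : ℝ) (hd0 : 0 ≤ d) (hdn : d ≤ n)
    (gstar : Fin n → ℝ)
    (hgstar : gstar = (Real.sqrt (∑ i, Ssq.mulVec hstar i ^ 2))⁻¹ • X.mulVec hstar)
    (astar : Fin p → ℝ)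
    (hastar : astar = (Real.sqrt (∑ i, Ssq.mulVec hstar i ^ 2))⁻¹ • Sig.mulVec hstar)
    (Δa Δb Δc : ℝ)
    (hΔa : Δa = σ ^ 2 *
      |(1 - d / n) - (∑ i, ε i * (y i - X.mulVec bhat i)) / ((n : ℝ) * σ ^ 2)| ^ 2 / Rst)
    (hΔb : Δb = max (Fp - 1) 0 * (∑ i, (y i - X.mulVec bhat i) ^ 2) / ((n : ℝ) * Rst))
    (hΔc : Δc = |(1 - d / n) * (∑ j, astar j * h j) -
      (∑ i, gstar i * (X.mulVec bhat i - y i)) / n| ^ 2 / Rst) :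
    (1 - d / (n : ℝ)) ^ 2 / 8
      ≤ (∑ i, (y i - X.mulVec bhat i) ^ 2) / ((n : ℝ) * Rst) + Δa + Δb + Δc := by
  -- abbreviations
  set s2 : ℝ := ∑ i, Ssq.mulVec hstar i ^ 2 with hs2def
  set Sr : ℝ := ∑ i, (y i - X.mulVec bhat i) ^ 2 with hSrdef
  set ip_er : ℝ := ∑ i, ε i * (y i - X.mulVec bhat i) with hiperdef
  set ip_xr : ℝ := ∑ i, X.mulVec hstar i * (y i - X.mulVec bhat i) with hipxrdef
  set ip_Sh : ℝ := ∑ j, Sig.mulVec hstar j * h j with hipShdef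
  set Sa : ℝ := ∑ j, astar j * h j with hSadef
  set s : ℝ := Real.sqrt s2 with hsdef
  set t : ℝ := 1 - d / (n : ℝ) with htdef
  -- basic positivity facts
  have hs2nn : 0 ≤ s2 := Finset.sum_nonneg fun i _ => sq_nonneg _
  have hSrnn : 0 ≤ Sr := Finset.sum_nonneg fun i _ => sq_nonneg _
  have hRpos : 0 < Rst := by rw [hRst]; positivity
  have hssq : s ^ 2 = s2 := Real.sq_sqrt hs2nn
  have hsnn : 0 ≤ s := Real.sqrt_nonneg _
  have hFp1 : 1 ≤ Fp := by
    rw [hFp]; exact le_max_of_le_right (le_max_of_le_right (le_max_right _ _))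
  -- if s2 = 0 then hstar = 0
  have hstar0 : s2 = 0 → hstar = 0 := by
    intro h0
    by_contra hne
    have hpd := hSsqPD.dotProduct_mulVec_pos hne
    have hzero : Ssq.mulVec hstar = 0 := by
      funext i
      have := (Finset.sum_eq_zero_iff_of_nonneg
        (fun i _ => sq_nonneg (Ssq.mulVec hstar i))).mp h0.symm.symm i (Finset.mem_univ i)
      have := pow_eq_zero_iff (n := 2) (by norm_num) |>.mp this
      simpa using this
    rw [hzero] at hpd
    simp [dotProduct] at hpd
  -- scaling identities
  have hF6a : s * Sa = ip_Sh := by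
    rw [hSadef, hipShdef, hastar]
    rcases eq_or_lt_of_le hs2nn with h0 | h0
    · have h0' := hstar0 h0.symm
      simp [h0']
    · have hspos : 0 < s := Real.sqrt_pos.mpr h0
      rw [Finset.mul_sum]
      refine Finset.sum_congr rfl fun j _ => ?_
      simp only [Pi.smul_apply, smul_eq_mul, ← hsdef]
      field_simp
  have hF6b : s * (∑ i, gstar i * (y i - X.mulVec bhat i)) = ip_xr := by
    rw [hipxrdef, hgstar]
    rcases eq_or_lt_of_le hs2nn with h0 | h0
    · have h0' := hstar0 h0.symm
      simp [h0']
    · have hspos : 0 < s := Real.sqrt_pos.mpr h0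
      rw [Finset.mul_sum]
      refine Finset.sum_congr rfl fun i _ => ?_
      simp only [Pi.smul_apply, smul_eq_mul, ← hsdef]
      field_simp
  -- key matrix identity
  have hMkey : ∀ v : Fin p → ℝ,
      ∑ i, Ssq.mulVec hstar i * Ssq.mulVec v i = ∑ j, Sig.mulVec hstar j * v j := by
    intro v
    have h1 : Ssq.mulVec hstar ⬝ᵥ Ssq.mulVec v = (Ssq.mulVec hstar ᵥ* Ssq) ⬝ᵥ v :=
      dotProduct_mulVec _ _ _
    have h2 : Ssq.mulVec hstar ᵥ* Ssq = Sig.mulVec hstar := by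
      nth_rewrite 2 [← hSsqSym]
      rw [vecMul_transpose, mulVec_mulVec, hSsqSq]
    simpa [dotProduct, h2] using h1
  have hFs2 : ∑ j, Sig.mulVec hstar j * hstar j = s2 := by
    rw [← hMkey hstar, hs2def]
    exact Finset.sum_congr rfl fun i _ => by ring
  -- first-order optimality for bhat
  have O1 : ∀ v : Fin p → ℝ,
      g bhat + (∑ i, (y i - X.mulVec bhat i) * X.mulVec v i) / (n : ℝ) ≤ g (bhat + v) := by
    intro v
    have key : 0 ≤ g (bhat + v) - g bhat
        - (∑ i, (y i - X.mulVec bhat i) * X.mulVec v i) / (n : ℝ) := by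
      apply aux_nonneg_of_forall _ ((∑ i, X.mulVec v i ^ 2) / (2 * (n : ℝ)))
        (by positivity)
      intro τ hτ0 hτ1
      have hmin : (∑ i, (y i - X.mulVec bhat i) ^ 2) / (2 * (n : ℝ)) + g bhat
          ≤ (∑ i, (y i - X.mulVec (bhat + τ • v) i) ^ 2) / (2 * (n : ℝ))
            + g (bhat + τ • v) :=
        isMinOn_iff.mp hbhat _ (Set.mem_univ _)
      rw [← hSrdef] at hmin
      have hexp : ∑ i, (y i - X.mulVec (bhat + τ • v) i) ^ 2
          = Sr - 2 * τ * (∑ i, (y i - X.mulVec bhat i) * X.mulVec v i)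
            + τ ^ 2 * ∑ i, X.mulVec v i ^ 2 := by
        have hmv : ∀ i, y i - X.mulVec (bhat + τ • v) i
            = (y i - X.mulVec bhat i) - τ * X.mulVec v i := by
          intro i
          rw [Matrix.mulVec_add, Matrix.mulVec_smul]
          simp [smul_eq_mul]
          ring
        simp only [hmv]
        exact sum_sq_expand_sub _ _ _
      have hconv : g (bhat + τ • v) ≤ (1 - τ) * g bhat + τ * g (bhat + v) := by
        have hcomb : (1 - τ) • bhat + τ • (bhat + v) = bhat + τ • v := by
          funext j
          simp [smul_eq_mul]
          ring
        have h2 := hg.2 (Set.mem_univ bhat) (Set.mem_univ (bhat + v))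
          (by linarith : (0:ℝ) ≤ 1 - τ) (le_of_lt hτ0) (by ring)
        rw [hcomb] at h2
        simpa [smul_eq_mul] using h2
      rw [hexp] at hmin
      set ipv : ℝ := ∑ i, (y i - X.mulVec bhat i) * X.mulVec v i with hipv
      set Sv : ℝ := ∑ i, X.mulVec v i ^ 2 with hSv
      have hsplit : (Sr - 2 * τ * ipv + τ ^ 2 * Sv) / (2 * (n : ℝ))
          = Sr / (2 * (n : ℝ)) - τ * (ipv / (n : ℝ)) + τ * (τ * (Sv / (2 * (n : ℝ)))) := by
        rcases eq_or_ne (n : ℝ) 0 with h0 | h0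
        · simp [h0]
        · field_simp
      rw [hsplit] at hmin
      have hτW : 0 ≤ τ * (g (bhat + v) - g bhat - ipv / (n : ℝ)
          + τ * (Sv / (2 * (n : ℝ)))) := by
        have expand : τ * (g (bhat + v) - g bhat - ipv / (n : ℝ)
            + τ * (Sv / (2 * (n : ℝ))))
            = (Sr / (2 * (n : ℝ)) - τ * (ipv / (n : ℝ)) + τ * (τ * (Sv / (2 * (n : ℝ))))
                + ((1 - τ) * g bhat + τ * g (bhat + v)))
              - (Sr / (2 * (n : ℝ)) + g bhat) := by ring
        rw [expand]
        linarith [hmin, hconv]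
      have hW := (mul_nonneg_iff_of_pos_left hτ0).mp hτW
      linarith
    linarith
  -- first-order optimality for bstar
  have O2 : ∀ v : Fin p → ℝ,
      g bstar - (∑ j, Sig.mulVec hstar j * v j) ≤ g (bstar + v) := by
    intro v
    have key : 0 ≤ g (bstar + v) - g bstar + (∑ j, Sig.mulVec hstar j * v j) := by
      apply aux_nonneg_of_forall _ ((∑ i, Ssq.mulVec v i ^ 2) / 2) (by positivity)
      intro τ hτ0 hτ1
      have hmin : (∑ i, Ssq.mulVec (β - bstar) i ^ 2) / 2 + g bstar
          ≤ (∑ i, Ssq.mulVec (β - (bstar + τ • v)) i ^ 2) / 2 + g (bstar + τ • v) :=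
        isMinOn_iff.mp hbstar _ (Set.mem_univ _)
      have hlhs : (∑ i, Ssq.mulVec (β - bstar) i ^ 2) = s2 := by
        rw [hs2def]
        refine Finset.sum_congr rfl fun i _ => ?_
        rw [show β - bstar = -hstar by rw [hhs]; abel, Matrix.mulVec_neg]
        simp [neg_sq]
      rw [hlhs] at hmin
      have hexp : ∑ i, Ssq.mulVec (β - (bstar + τ • v)) i ^ 2
          = s2 + 2 * τ * (∑ j, Sig.mulVec hstar j * v j)
            + τ ^ 2 * ∑ i, Ssq.mulVec v i ^ 2 := by
        have hvec : β - (bstar + τ • v) = -hstar - τ • v := by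
          rw [hhs]; abel
        have hmv : ∀ i, Ssq.mulVec (β - (bstar + τ • v)) i
            = -(Ssq.mulVec hstar i + τ * Ssq.mulVec v i) := by
          intro i
          rw [hvec, Matrix.mulVec_sub, Matrix.mulVec_neg, Matrix.mulVec_smul]
          simp [smul_eq_mul]
          ring
        have hsq : ∀ i, Ssq.mulVec (β - (bstar + τ • v)) i ^ 2
            = (Ssq.mulVec hstar i + τ * Ssq.mulVec v i) ^ 2 := by
          intro i; rw [hmv i, neg_sq]
        simp only [hsq]
        rw [sum_sq_expand_add, ← hs2def, hMkey v]
      have hconv : g (bstar + τ • v) ≤ (1 - τ) * g bstar + τ * g (bstar + v) := by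
        have hcomb : (1 - τ) • bstar + τ • (bstar + v) = bstar + τ • v := by
          funext j
          simp [smul_eq_mul]
          ring
        have h2 := hg.2 (Set.mem_univ bstar) (Set.mem_univ (bstar + v))
          (by linarith : (0:ℝ) ≤ 1 - τ) (le_of_lt hτ0) (by ring)
        rw [hcomb] at h2
        simpa [smul_eq_mul] using h2
      rw [hexp] at hmin
      set ipw : ℝ := ∑ j, Sig.mulVec hstar j * v j with hipw
      set Sv : ℝ := ∑ i, Ssq.mulVec v i ^ 2 with hSv
      have hsplit : (s2 + 2 * τ * ipw + τ ^ 2 * Sv) / 2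
          = s2 / 2 + τ * ipw + τ * (τ * (Sv / 2)) := by
        field_simp
      rw [hsplit] at hmin
      have hτW : 0 ≤ τ * (g (bstar + v) - g bstar + ipw + τ * (Sv / 2)) := by
        have expand : τ * (g (bstar + v) - g bstar + ipw + τ * (Sv / 2))
            = (s2 / 2 + τ * ipw + τ * (τ * (Sv / 2))
                + ((1 - τ) * g bstar + τ * g (bstar + v))) - (s2 / 2 + g bstar) := by ring
        rw [expand]
        linarith [hmin, hconv]
      have hW := (mul_nonneg_iff_of_pos_left hτ0).mp hτW
      linarith
    linarith
  -- Xh = ε - r pointwise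
  have hXh : ∀ i, X.mulVec h i = ε i - (y i - X.mulVec bhat i) := by
    intro i
    rw [hh, Matrix.mulVec_sub, hy]
    simp only [Pi.sub_apply, Pi.add_apply]
    ring
  -- KEY inequality from convexity
  have F4 : s2 - (ip_er - Sr - ip_xr) / (n : ℝ) ≤ ip_Sh := by
    have o1 := O1 (bstar - bhat)
    rw [show bhat + (bstar - bhat) = bstar by abel] at o1
    have o2 := O2 (bhat - bstar)
    rw [show bstar + (bhat - bstar) = bhat by abel] at o2
    have e1 : ∑ i, (y i - X.mulVec bhat i) * X.mulVec (bstar - bhat) i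
        = ip_xr - (ip_er - Sr) := by
      have hterm : ∀ i, (y i - X.mulVec bhat i) * X.mulVec (bstar - bhat) i
          = X.mulVec hstar i * (y i - X.mulVec bhat i)
            - (ε i * (y i - X.mulVec bhat i) - (y i - X.mulVec bhat i) ^ 2) := by
        intro i
        rw [show bstar - bhat = hstar - h from by rw [hh, hhs]; abel, Matrix.mulVec_sub]
        simp only [Pi.sub_apply]
        rw [hXh i]
        ring
      rw [Finset.sum_congr rfl fun i _ => hterm i, Finset.sum_sub_distrib,
        Finset.sum_sub_distrib, ← hipxrdef, ← hiperdef, ← hSrdef]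
    have e2 : ∑ j, Sig.mulVec hstar j * (bhat - bstar) j = ip_Sh - s2 := by
      have hterm : ∀ j, Sig.mulVec hstar j * (bhat - bstar) j
          = Sig.mulVec hstar j * h j - Sig.mulVec hstar j * hstar j := by
        intro j
        rw [show bhat - bstar = h - hstar from by rw [hh, hhs]; abel]
        simp only [Pi.sub_apply]
        ring
      rw [Finset.sum_congr rfl fun j _ => hterm j, Finset.sum_sub_distrib, hFs2,
        ← hipShdef]
    rw [e1] at o1
    rw [e2] at o2
    have : (ip_xr - (ip_er - Sr)) / (n : ℝ) = -((ip_er - Sr - ip_xr) / (n : ℝ)) := by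
      rw [← neg_div]; ring_nf
    rw [this] at o1
    linarith
  -- case split on n
  rcases Nat.eq_zero_or_pos n with rfl | hn
  · -- degenerate case n = 0
    simp only [Nat.cast_zero, div_zero, zero_div, mul_zero, sub_zero, abs_one, one_pow,
      mul_one, Finset.univ_eq_empty, Finset.sum_empty] at *
    have hSa2 : s2 ≤ Sa ^ 2 := by
      nlinarith [hF6a, F4, hssq, hsnn, sq_nonneg (Sa - s)]
    rw [hSrdef] at hΔb ⊢
    rw [hiperdef] at hΔa
    rw [htdef] at hΔa hΔc ⊢
    simp only [zero_div, mul_zero, zero_mul, sub_zero, abs_one, one_pow, mul_one,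
      one_mul, div_zero, sq_abs, zero_add] at hΔa hΔb hΔc ⊢
    rw [hΔa, hΔb, hΔc]
    have h18 : (1:ℝ)/8 ≤ σ^2/Rst + Sa^2/Rst := by
      rw [← add_div, le_div_iff₀ hRpos, hRst]
      nlinarith [hSa2, hs2nn, sq_nonneg σ]
    linarith
  · -- main case n ≥ 1
    have hnR : (0:ℝ) < (n : ℝ) := by exact_mod_cast hn
    have ht0 : 0 ≤ t := by
      rw [htdef]
      have : d / (n : ℝ) ≤ 1 := (div_le_one hnR).mpr hdn
      linarith
    have ht1 : t ≤ 1 := by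
      rw [htdef]
      have : 0 ≤ d / (n : ℝ) := div_nonneg hd0 hnR.le
      linarith
    have hne : (n:ℝ) ≠ 0 := ne_of_gt hnR
    have hσne : σ ≠ 0 := ne_of_gt hσ
    have hσ2 : (0:ℝ) < σ^2 := by positivity
    have hnRst : (0:ℝ) < (n:ℝ) * Rst := mul_pos hnR hRpos
    set A : ℝ := t - ip_er / ((n:ℝ) * σ^2) with hAdef
    set Cq : ℝ := t * Sa - (∑ i, gstar i * (X.mulVec bhat i - y i)) / (n:ℝ) with hCdef
    have hgr : ∑ i, gstar i * (X.mulVec bhat i - y i)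
        = -(∑ i, gstar i * (y i - X.mulVec bhat i)) := by
      rw [← Finset.sum_neg_distrib]
      exact Finset.sum_congr rfl fun i _ => by ring
    have hsC : s * Cq = t * ip_Sh + ip_xr / (n:ℝ) := by
      rw [hCdef, hgr, ← hF6a, ← hF6b]
      ring
    have step1 : t * σ^2 = σ^2 * A + ip_er / (n:ℝ) := by
      rw [hAdef]
      field_simp
      ring
    have step2 : t * s2 ≤ t * ip_Sh + t * ((ip_er - Sr - ip_xr) / (n:ℝ)) := by
      have h1 := mul_le_mul_of_nonneg_left F4 ht0
      have h2 : t * (s2 - (ip_er - Sr - ip_xr) / (n:ℝ))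
          = t * s2 - t * ((ip_er - Sr - ip_xr) / (n:ℝ)) := by ring
      linarith
    have main1 : t * Rst ≤ σ^2 * A + s * Cq + ((1+t)/(n:ℝ)) * (ip_er - ip_xr) := by
      have hSrn : 0 ≤ t*Sr/(n:ℝ) := by positivity
      have key : t*s2 ≤ t*ip_Sh + (t*ip_er/(n:ℝ) - t*Sr/(n:ℝ) - t*ip_xr/(n:ℝ)) := by
        have hdiv : t * ((ip_er - Sr - ip_xr)/(n:ℝ))
            = t*ip_er/(n:ℝ) - t*Sr/(n:ℝ) - t*ip_xr/(n:ℝ) := by ring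
        linarith [step2, hdiv]
      have e0 : t*Rst = t*σ^2 + t*s2 := by rw [hRst]; ring
      have e4 : σ^2*A + s*Cq + ((1+t)/(n:ℝ))*(ip_er - ip_xr)
          = (σ^2*A + ip_er/(n:ℝ))
            + (t*ip_Sh + (t*ip_er/(n:ℝ) - t*ip_xr/(n:ℝ))) := by
        rw [hsC]
        field_simp
        ring
      rw [e0, step1, e4]
      linarith [key, hSrn]
    have hP : 0 ≤ σ^2*A^2 + Cq^2 := by positivity
    have cs1 : σ^2 * A + s * Cq ≤ Real.sqrt (Rst * (σ^2*A^2 + Cq^2)) := by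
      have hb : (σ^2*A + s*Cq)^2 ≤ Rst * (σ^2*A^2 + Cq^2) := by
        have hcert : Rst * (σ^2*A^2 + Cq^2) - (σ^2*A + s*Cq)^2
            = σ^2*(Cq - s*A)^2 := by
          rw [hRst, ← hssq]
          ring
        have hnn := mul_nonneg (sq_nonneg σ) (sq_nonneg (Cq - s*A))
        linarith [hcert, hnn]
      calc σ^2*A + s*Cq ≤ |σ^2*A + s*Cq| := le_abs_self _
        _ = Real.sqrt ((σ^2*A + s*Cq)^2) := (Real.sqrt_sq_eq_abs _).symm
        _ ≤ _ := Real.sqrt_le_sqrt hb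
    have hSex : (∑ i, (ε i - X.mulVec hstar i)^2) ≤ Fp * ((n:ℝ) * Rst) := by
      have h1 : (∑ i, (ε i - X.mulVec hstar i)^2) / ((n:ℝ)*Rst) ≤ Fp := by
        rw [hFp]
        exact le_max_of_le_right (le_max_of_le_right (le_max_left _ _))
      calc (∑ i, (ε i - X.mulVec hstar i)^2)
          = (∑ i, (ε i - X.mulVec hstar i)^2)/((n:ℝ)*Rst) * ((n:ℝ)*Rst) := by
            field_simp
        _ ≤ Fp * ((n:ℝ)*Rst) := mul_le_mul_of_nonneg_right h1 hnRst.le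
    have cs2 : ip_er - ip_xr ≤ Real.sqrt (Fp * ((n:ℝ)*Rst) * Sr) := by
      have hdiff : ip_er - ip_xr
          = ∑ i, (ε i - X.mulVec hstar i) * (y i - X.mulVec bhat i) := by
        rw [hiperdef, hipxrdef, ← Finset.sum_sub_distrib]
        exact Finset.sum_congr rfl fun i _ => by ring
      have hcs := Finset.sum_mul_sq_le_sq_mul_sq Finset.univ
        (fun i => ε i - X.mulVec hstar i) (fun i => y i - X.mulVec bhat i)
      have hb : (ip_er - ip_xr)^2 ≤ Fp * ((n:ℝ)*Rst) * Sr := by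
        rw [hdiff]
        calc (∑ i, (ε i - X.mulVec hstar i) * (y i - X.mulVec bhat i))^2
            ≤ (∑ i, (ε i - X.mulVec hstar i)^2) * ∑ i, (y i - X.mulVec bhat i)^2 := hcs
          _ = (∑ i, (ε i - X.mulVec hstar i)^2) * Sr := by rw [← hSrdef]
          _ ≤ Fp * ((n:ℝ)*Rst) * Sr := mul_le_mul_of_nonneg_right hSex hSrnn
      calc ip_er - ip_xr ≤ |ip_er - ip_xr| := le_abs_self _
        _ = Real.sqrt ((ip_er - ip_xr)^2) := (Real.sqrt_sq_eq_abs _).symm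
        _ ≤ _ := Real.sqrt_le_sqrt hb
    set E' : ℝ := (σ^2*A^2 + Cq^2)/Rst with hE'def
    set Q' : ℝ := Fp * (Sr/((n:ℝ)*Rst)) with hQ'def
    have hxnn : 0 ≤ Sr/((n:ℝ)*Rst) := div_nonneg hSrnn hnRst.le
    have hE'nn : 0 ≤ E' := div_nonneg hP hRpos.le
    have hQ'nn : 0 ≤ Q' := mul_nonneg (le_trans zero_le_one hFp1) hxnn
    have sqrtid1 : Real.sqrt (Rst * (σ^2*A^2 + Cq^2)) = Rst * Real.sqrt E' := by
      have h5 : Rst * (Real.sqrt (σ^2*A^2 + Cq^2) / Real.sqrt Rst)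
          = Rst / Real.sqrt Rst * Real.sqrt (σ^2*A^2 + Cq^2) := by ring
      rw [hE'def, Real.sqrt_div hP, h5, Real.div_sqrt]
      exact Real.sqrt_mul hRpos.le _
    have sqrtid2 : Real.sqrt (Fp*((n:ℝ)*Rst)*Sr) = ((n:ℝ)*Rst) * Real.sqrt Q' := by
      have hid : Fp * ((n:ℝ)*Rst) * Sr = Q' * ((n:ℝ)*Rst)^2 := by
        rw [hQ'def]
        field_simp
      rw [hid, Real.sqrt_mul hQ'nn, Real.sqrt_sq hnRst.le]
      ring
    have step7 : t ≤ Real.sqrt E' + 2 * Real.sqrt Q' := by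
      have hle2 : ((1+t)/(n:ℝ)) * (ip_er - ip_xr)
          ≤ ((1+t)/(n:ℝ)) * (((n:ℝ)*Rst) * Real.sqrt Q') := by
        rw [← sqrtid2]
        exact mul_le_mul_of_nonneg_left cs2 (by positivity)
      have h2 : ((1+t)/(n:ℝ)) * (((n:ℝ)*Rst) * Real.sqrt Q')
          = (1+t)*(Rst*Real.sqrt Q') := by
        field_simp
      have h3 : (1+t)*(Rst*Real.sqrt Q') ≤ 2*(Rst*Real.sqrt Q') := by
        apply mul_le_mul_of_nonneg_right (by linarith)
          (mul_nonneg hRpos.le (Real.sqrt_nonneg _))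
      have h4 : t * Rst ≤ (Real.sqrt E' + 2*Real.sqrt Q') * Rst := by
        have hring : (Real.sqrt E' + 2*Real.sqrt Q') * Rst
            = Rst * Real.sqrt E' + 2*(Rst*Real.sqrt Q') := by ring
        rw [hring]
        calc t * Rst ≤ σ^2*A + s*Cq + ((1+t)/(n:ℝ))*(ip_er - ip_xr) := main1
          _ ≤ Real.sqrt (Rst*(σ^2*A^2+Cq^2)) + (1+t)*(Rst*Real.sqrt Q') := by
              rw [← h2]
              exact add_le_add cs1 hle2
          _ ≤ Rst * Real.sqrt E' + 2*(Rst*Real.sqrt Q') := by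
              rw [sqrtid1]; linarith [h3]
      exact le_of_mul_le_mul_right h4 hRpos
    have he2 : (Real.sqrt E')^2 = E' := Real.sq_sqrt hE'nn
    have hq2 : (Real.sqrt Q')^2 = Q' := Real.sq_sqrt hQ'nn
    have hQle : Q' ≤ Sr/((n:ℝ)*Rst) + Δb := by
      rw [hQ'def, hΔb]
      have hmd : max (Fp-1) 0 * Sr / ((n:ℝ)*Rst) = max (Fp-1) 0 * (Sr/((n:ℝ)*Rst)) := by
        ring
      rw [hmd]
      have hmax := mul_le_mul_of_nonneg_right (le_max_left (Fp-1) 0) hxnn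
      have hexp : Fp*(Sr/((n:ℝ)*Rst))
          = Sr/((n:ℝ)*Rst) + (Fp - 1)*(Sr/((n:ℝ)*Rst)) := by ring
      linarith [hmax, hexp]
    have hEeq : E' = Δa + Δc := by
      rw [hΔa, hΔc, sq_abs, sq_abs, hE'def, add_div]
    have tsq : t^2 ≤ (Real.sqrt E' + 2*Real.sqrt Q')^2 :=
      pow_le_pow_left₀ ht0 step7 2
    have t5 : t^2 ≤ 5*E' + 5*Q' := by
      have hx1 : (Real.sqrt E' + 2*Real.sqrt Q')^2
          = (Real.sqrt E')^2 + 4*(Real.sqrt E' * Real.sqrt Q') + 4*(Real.sqrt Q')^2 := by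
        ring
      have hx2 : (2*Real.sqrt E' - Real.sqrt Q')^2
          = 4*(Real.sqrt E')^2 - 4*(Real.sqrt E' * Real.sqrt Q') + (Real.sqrt Q')^2 := by
        ring
      have hx3 := sq_nonneg (2*Real.sqrt E' - Real.sqrt Q')
      linarith [tsq, hx1, hx2, hx3, he2, hq2]
    have hΔann : 0 ≤ Δa := by
      rw [hΔa]
      exact div_nonneg (by positivity) hRpos.le
    have hΔbnn : 0 ≤ Δb := by
      rw [hΔb]
      exact div_nonneg (mul_nonneg (le_max_right _ _) hSrnn) hnRst.le
    have hΔcnn : 0 ≤ Δc := by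
      rw [hΔc]
      exact div_nonneg (by positivity) hRpos.le
    clear_value s2 Sr ip_er ip_xr ip_Sh Sa s t A Cq E' Q'
    linarith [t5, hEeq, hQle, hΔann, hΔbnn, hΔcnn, hxnn]
end
end
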